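/- arXiv:2101.10159 — 8 statements merged into one kernel-verified Lean document; each statement's English description precedes it below -/
import Mathlib

section
/- Let n be a positive integer and let P1d, P1i, P2d, P2i be n×n real symmetric positive semidefinite matrices. For w ∈ (0,1) define P₁(w) = (1/w)·P1d + P1i, P₂(w) = (1/(1−w))·P2d + P2i, and P(w) = (P₁(w)⁻¹ + P₂(w)⁻¹)⁻¹. Assume P₁(w) and P₂(w) are positive definite for every w ∈ (0,1). Then the function w ↦ det(P(w)) is convex on the open interval (0,1). -/
open Matrix Finset

set_option maxHeartbeats 1000000

namespace SplitCIF

variable {n : ℕ}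

lemma psd_nonneg {M : Matrix (Fin n) (Fin n) ℝ} (hM : M.PosSemidef) (x : Fin n → ℝ) :
    0 ≤ x ⬝ᵥ M *ᵥ x := by simpa using hM.dotProduct_mulVec_nonneg x

lemma herm_transpose' {M : Matrix (Fin n) (Fin n) ℝ} (hM : M.IsHermitian) : Mᵀ = M := by
  rw [← Matrix.conjTranspose_eq_transpose_of_trivial]; exact hM.eq

lemma bilin_comm {M : Matrix (Fin n) (Fin n) ℝ} (hM : M.IsHermitian) (x y : Fin n → ℝ) :
    x ⬝ᵥ M *ᵥ y = y ⬝ᵥ M *ᵥ x := by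
  rw [dotProduct_mulVec, dotProduct_comm, ← mulVec_transpose, herm_transpose' hM]

lemma smul_posDef {A : Matrix (Fin n) (Fin n) ℝ} (hA : A.PosDef) {a : ℝ} (ha : 0 < a) :
    (a • A).PosDef := by
  refine PosDef.of_dotProduct_mulVec_pos ?_ ?_
  · show (a • A)ᴴ = a • A
    rw [conjTranspose_smul, star_trivial, hA.1.eq]
  · intro x hx
    have h := hA.dotProduct_mulVec_pos hx
    simp only [star_trivial] at h ⊢
    rw [smul_mulVec, dotProduct_smul, smul_eq_mul]
    exact mul_pos ha h

lemma combo_posDef {A B : Matrix (Fin n) (Fin n) ℝ} (hA : A.PosDef) (hB : B.PosDef)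
    {a b : ℝ} (ha : 0 ≤ a) (hb : 0 ≤ b) (hab : a + b = 1) : (a • A + b • B).PosDef := by
  rcases eq_or_lt_of_le ha with h0|hapos
  · have hb1 : b = 1 := by linarith
    rw [← h0, hb1]
    simpa using hB
  · rcases eq_or_lt_of_le hb with h0'|hbpos
    · have ha1 : a = 1 := by linarith
      rw [← h0', ha1]
      simpa using hA
    · exact (smul_posDef hA hapos).add (smul_posDef hB hbpos)
lemma quad_key {D E : Matrix (Fin n) (Fin n) ℝ} (hD : D.PosSemidef) (hE : E.PosSemidef)
    {s t a b : ℝ} (hs : 0 < s) (ht : 0 < t) (ha : 0 ≤ a) (hb : 0 ≤ b) (hab : a + b = 1)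
    (hAs : ((1/s) • D + E).PosDef) (hAt : ((1/t) • D + E).PosDef)
    (hAw : ((1/(a*s+b*t)) • D + E).PosDef) (x : Fin n → ℝ) :
    a * (x ⬝ᵥ ((1/s) • D + E)⁻¹ *ᵥ x) + b * (x ⬝ᵥ ((1/t) • D + E)⁻¹ *ᵥ x)
      ≤ x ⬝ᵥ ((1/(a*s+b*t)) • D + E)⁻¹ *ᵥ x := by
  have hw : 0 < a*s+b*t := by
    rcases eq_or_lt_of_le ha with h|h
    · have hb1 : b = 1 := by linarith
      rw [← h, hb1]; simpa using ht
    · nlinarith [mul_pos h hs, mul_nonneg hb ht.le]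
  set As := (1/s) • D + E with hAsdef
  set At := (1/t) • D + E with hAtdef
  set Aw := (1/(a*s+b*t)) • D + E with hAwdef
  have hAsu : IsUnit As.det := isUnit_iff_ne_zero.mpr hAs.det_pos.ne'
  have hAtu : IsUnit At.det := isUnit_iff_ne_zero.mpr hAt.det_pos.ne'
  have hAwu : IsUnit Aw.det := isUnit_iff_ne_zero.mpr hAw.det_pos.ne'
  set p := As⁻¹ *ᵥ x with hp
  set q := At⁻¹ *ᵥ x with hq
  have hxp : As *ᵥ p = x := by
    rw [hp, mulVec_mulVec, Matrix.mul_nonsing_inv _ hAsu, one_mulVec]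
  have hxq : At *ᵥ q = x := by
    rw [hq, mulVec_mulVec, Matrix.mul_nonsing_inv _ hAtu, one_mulVec]
  set y := a • p + b • q with hy
  -- key1
  have hwx : Aw *ᵥ (Aw⁻¹ *ᵥ x) = x := by
    rw [mulVec_mulVec, Matrix.mul_nonsing_inv _ hAwu, one_mulVec]
  have h0 : 0 ≤ (Aw⁻¹ *ᵥ x - y) ⬝ᵥ Aw *ᵥ (Aw⁻¹ *ᵥ x - y) :=
    psd_nonneg hAw.posSemidef _
  have hcross : (Aw⁻¹ *ᵥ x) ⬝ᵥ Aw *ᵥ y = x ⬝ᵥ y := by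
    rw [bilin_comm hAw.isHermitian, hwx, dotProduct_comm]
  have hrid : (Aw⁻¹ *ᵥ x - y) ⬝ᵥ Aw *ᵥ (Aw⁻¹ *ᵥ x - y)
      = x ⬝ᵥ Aw⁻¹ *ᵥ x - 2*(x ⬝ᵥ y) + y ⬝ᵥ Aw *ᵥ y := by
    rw [mulVec_sub, hwx, sub_dotProduct, dotProduct_sub, dotProduct_sub, hcross,
      dotProduct_comm (Aw⁻¹ *ᵥ x) x, dotProduct_comm y x]
    ring
  have key1 : 2*(x ⬝ᵥ y) - y ⬝ᵥ Aw *ᵥ y ≤ x ⬝ᵥ Aw⁻¹ *ᵥ x := by linarith [hrid ▸ h0]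
  -- scalar abbreviations
  set dp := p ⬝ᵥ D *ᵥ p with hdp
  set dq := q ⬝ᵥ D *ᵥ q with hdq
  set dpq := p ⬝ᵥ D *ᵥ q with hdpq
  set ep := p ⬝ᵥ E *ᵥ p with hep
  set eq' := q ⬝ᵥ E *ᵥ q with heq'
  set epq := p ⬝ᵥ E *ᵥ q with hepq
  have hDc : q ⬝ᵥ D *ᵥ p = dpq := (bilin_comm hD.isHermitian q p)
  have hEc : q ⬝ᵥ E *ᵥ p = epq := (bilin_comm hE.isHermitian q p)
  have hyD : y ⬝ᵥ D *ᵥ y = a^2*dp + 2*(a*b*dpq) + b^2*dq := by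
    rw [hy]
    simp only [mulVec_add, mulVec_smul, dotProduct_add, add_dotProduct,
      dotProduct_smul, smul_dotProduct, smul_eq_mul, hDc]
    ring
  have hyE : y ⬝ᵥ E *ᵥ y = a^2*ep + 2*(a*b*epq) + b^2*eq' := by
    rw [hy]
    simp only [mulVec_add, mulVec_smul, dotProduct_add, add_dotProduct,
      dotProduct_smul, smul_dotProduct, smul_eq_mul, hEc]
    ring
  have hAwy : y ⬝ᵥ Aw *ᵥ y = (1/(a*s+b*t))*(y ⬝ᵥ D *ᵥ y) + y ⬝ᵥ E *ᵥ y := by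
    rw [hAwdef, add_mulVec, smul_mulVec, dotProduct_add, dotProduct_smul, smul_eq_mul]
  have hxpv : x ⬝ᵥ p = (1/s)*dp + ep := by
    rw [← hxp, dotProduct_comm, hAsdef, add_mulVec, smul_mulVec,
      dotProduct_add, dotProduct_smul, smul_eq_mul]
  have hxqv : x ⬝ᵥ q = (1/t)*dq + eq' := by
    rw [← hxq, dotProduct_comm, hAtdef, add_mulVec, smul_mulVec,
      dotProduct_add, dotProduct_smul, smul_eq_mul]
  have hxy : x ⬝ᵥ y = a*((1/s)*dp + ep) + b*((1/t)*dq + eq') := by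
    rw [hy, dotProduct_add, dotProduct_smul, dotProduct_smul, smul_eq_mul, smul_eq_mul,
      hxpv, hxqv]
  -- positivity facts
  have pos1 : 0 ≤ ep + eq' - 2*epq := by
    have h := psd_nonneg hE (p - q)
    simp only [mulVec_sub, dotProduct_sub, sub_dotProduct, hEc] at h
    linarith
  have pos2 : 0 ≤ t^2*dp + s^2*dq - 2*(s*t*dpq) := by
    have h := psd_nonneg hD (t • p - s • q)
    simp only [mulVec_sub, mulVec_smul, dotProduct_sub, sub_dotProduct,
      dotProduct_smul, smul_dotProduct, smul_eq_mul, hDc] at h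
    nlinarith [h]
  -- key2
  have hEineq : a^2*ep + 2*(a*b*epq) + b^2*eq' ≤ a*ep + b*eq' := by
    have hbb : b = 1 - a := by linarith
    have hident0 : a*ep + b*eq' - (a^2*ep + 2*(a*b*epq) + b^2*eq')
        = a*b*(ep + eq' - 2*epq) := by rw [hbb]; ring
    linarith [mul_nonneg (mul_nonneg ha hb) pos1, hident0]
  have hDineq : (1/(a*s+b*t))*(a^2*dp + 2*(a*b*dpq) + b^2*dq)
      ≤ a*((1/s)*dp) + b*((1/t)*dq) := by
    rw [div_mul_eq_mul_div, div_le_iff₀ hw]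
    have hident : (a*((1/s)*dp) + b*((1/t)*dq)) * (a*s+b*t)
        = a^2*dp + b^2*dq + a*b*((t/s)*dp + (s/t)*dq) := by
      field_simp
      ring
    have hst : 0 < s*t := mul_pos hs ht
    have h5 : 0 ≤ a*b*((t/s)*dp + (s/t)*dq - 2*dpq) := by
      apply mul_nonneg (mul_nonneg ha hb)
      have h6 : (t/s)*dp + (s/t)*dq - 2*dpq = (t^2*dp + s^2*dq - 2*(s*t*dpq))/(s*t) := by
        field_simp
      rw [h6]
      exact div_nonneg pos2 hst.le
    nlinarith [h5]
  have key2 : y ⬝ᵥ Aw *ᵥ y ≤ x ⬝ᵥ y := by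
    rw [hAwy, hyD, hyE, hxy]
    linarith
  have hxy2 : x ⬝ᵥ y = a*(x ⬝ᵥ p) + b*(x ⬝ᵥ q) := by
    rw [hy, dotProduct_add, dotProduct_smul, dotProduct_smul, smul_eq_mul, smul_eq_mul]
  linarith [key1, key2, hxy2]
lemma posDef_conj {M P : Matrix (Fin n) (Fin n) ℝ} (hM : M.PosDef) (hP : IsUnit P.det) :
    (Pᵀ * M * P).PosDef := by
  refine PosDef.of_dotProduct_mulVec_pos ?_ ?_
  · have hMT : Mᵀ = M := herm_transpose' hM.1
    show (Pᵀ * M * P)ᴴ = _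
    rw [conjTranspose_eq_transpose_of_trivial, transpose_mul, transpose_mul,
      transpose_transpose, hMT, mul_assoc]
  · intro x hx
    have hPx : P *ᵥ x ≠ 0 := by
      intro h
      apply hx
      have : P⁻¹ *ᵥ (P *ᵥ x) = x := by
        rw [mulVec_mulVec, Matrix.nonsing_inv_mul _ hP, one_mulVec]
      rw [h, mulVec_zero] at this
      exact this.symm
    have hform : star x ⬝ᵥ (Pᵀ * M * P) *ᵥ x
        = star (P *ᵥ x) ⬝ᵥ M *ᵥ (P *ᵥ x) := by
      simp only [star_trivial]
      rw [← mulVec_mulVec, ← mulVec_mulVec, dotProduct_mulVec, vecMul_transpose]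
    rw [hform]
    exact hM.dotProduct_mulVec_pos hPx

lemma det_smul_one_add_smul {C : Matrix (Fin n) (Fin n) ℝ} (hC : C.IsHermitian) (a b : ℝ) :
    (a • (1 : Matrix (Fin n) (Fin n) ℝ) + b • C).det = ∏ i, (a + b * hC.eigenvalues i) := by
  set U : Matrix (Fin n) (Fin n) ℝ := (hC.eigenvectorUnitary : Matrix (Fin n) (Fin n) ℝ)
    with hU
  have hUU : U * star U = 1 := (Matrix.mem_unitaryGroup_iff).mp hC.eigenvectorUnitary.2
  have hdiag : diagonal (RCLike.ofReal ∘ hC.eigenvalues) = diagonal hC.eigenvalues := by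
    congr 1
  have key : a • (1 : Matrix (Fin n) (Fin n) ℝ) + b • C
      = U * diagonal (fun i => a + b * hC.eigenvalues i) * star U := by
    have hdd : diagonal (fun i => a + b * hC.eigenvalues i)
        = a • (1 : Matrix (Fin n) (Fin n) ℝ) + b • diagonal hC.eigenvalues := by
      ext i j
      by_cases h : i = j
      · subst h
        simp [Matrix.diagonal_apply_eq, Matrix.one_apply_eq]
      · simp [Matrix.diagonal_apply_ne _ h, Matrix.one_apply_ne h]
    rw [hdd, mul_add, add_mul, mul_smul_comm, smul_mul_assoc, mul_one,
      mul_smul_comm, smul_mul_assoc, hUU]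
    congr 1
    conv_lhs => rw [hC.spectral_theorem, Unitary.conjStarAlgAut_apply, hdiag]
  rw [key, det_mul_right_comm, hUU, one_mul, det_diagonal]

open scoped MatrixOrder in
lemma det_le_det_of_sub_psd {A B : Matrix (Fin n) (Fin n) ℝ} (hA : A.PosDef)
    (hBA : (B - A).PosSemidef) : A.det ≤ B.det := by
  set R := CFC.sqrt A with hRdef
  have hRH : R.IsHermitian := (CFC.sqrt_nonneg A).posSemidef.1
  have hRR : R * R = A := CFC.sqrt_mul_sqrt_self A hA.posSemidef.nonneg
  have hdetR : R.det * R.det = A.det := by rw [← det_mul, hRR]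
  have hRu : IsUnit R.det := by
    rw [isUnit_iff_ne_zero]
    intro h
    rw [h, mul_zero] at hdetR
    exact hA.det_pos.ne hdetR
  set C := R⁻¹ * (B - A) * R⁻¹ with hCdef
  have hCps : C.PosSemidef := by
    have h := hBA.conjTranspose_mul_mul_same (B := R⁻¹)
    rwa [hRH.inv.eq] at h
  have hB : B = R * (1 + C) * R := by
    rw [mul_add, add_mul, mul_one, hRR, hCdef]
    have : R * (R⁻¹ * (B - A) * R⁻¹) * R = (R * R⁻¹) * (B - A) * (R⁻¹ * R) := by
      noncomm_ring
    rw [this, Matrix.mul_nonsing_inv _ hRu, Matrix.nonsing_inv_mul _ hRu, one_mul, mul_one]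
    noncomm_ring
  have h1C : 1 ≤ (1 + C).det := by
    have hd := det_smul_one_add_smul hCps.1 1 1
    simp only [one_smul, one_mul] at hd
    rw [hd]
    calc (1:ℝ) = ∏ _i : Fin n, (1:ℝ) := by simp
      _ ≤ ∏ i, (1 + hCps.1.eigenvalues i) := by
          apply Finset.prod_le_prod (fun i _ => by norm_num)
          intro i _
          linarith [hCps.eigenvalues_nonneg i]
  have hBdet : B.det = A.det * (1 + C).det := by
    rw [hB, det_mul, det_mul, ← hdetR]; ring
  calc A.det = A.det * 1 := (mul_one _).symm
    _ ≤ A.det * (1 + C).det := by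
        exact mul_le_mul_of_nonneg_left h1C hA.det_pos.le
    _ = B.det := hBdet.symm

open scoped MatrixOrder in
lemma det_rpow_combo {A B : Matrix (Fin n) (Fin n) ℝ} (hA : A.PosDef) (hB : B.PosDef)
    {a b : ℝ} (ha : 0 ≤ a) (hb : 0 ≤ b) (hab : a + b = 1) :
    A.det ^ a * B.det ^ b ≤ (a • A + b • B).det := by
  set R := CFC.sqrt A with hRdef
  have hRH : R.IsHermitian := (CFC.sqrt_nonneg A).posSemidef.1
  have hRR : R * R = A := CFC.sqrt_mul_sqrt_self A hA.posSemidef.nonneg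
  have hdetR : R.det * R.det = A.det := by rw [← det_mul, hRR]
  have hRu : IsUnit R.det := by
    rw [isUnit_iff_ne_zero]
    intro h
    rw [h, mul_zero] at hdetR
    exact hA.det_pos.ne hdetR
  have hRiu : IsUnit R⁻¹.det := by
    rw [Matrix.det_nonsing_inv, isUnit_iff_ne_zero, Ring.inverse_eq_inv]
    exact inv_ne_zero (isUnit_iff_ne_zero.mp hRu)
  have hRiH : R⁻¹.IsHermitian := hRH.inv
  set C := R⁻¹ * B * R⁻¹ with hCdef
  have hCpd : C.PosDef := by
    have h := posDef_conj (P := R⁻¹) hB hRiu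
    rwa [herm_transpose' hRiH] at h
  have hkey : a • A + b • B = R * (a • (1 : Matrix (Fin n) (Fin n) ℝ) + b • C) * R := by
    rw [mul_add, add_mul, mul_smul_comm, smul_mul_assoc, mul_one,
      mul_smul_comm, smul_mul_assoc, hRR, hCdef]
    have h2 : R * (R⁻¹ * B * R⁻¹) * R = (R * R⁻¹) * B * (R⁻¹ * R) := by noncomm_ring
    rw [h2, Matrix.mul_nonsing_inv _ hRu, Matrix.nonsing_inv_mul _ hRu, one_mul, mul_one]
  have hdet : (a • A + b • B).det = A.det * (a • (1 : Matrix (Fin n) (Fin n) ℝ) + b • C).det := by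
    rw [hkey, det_mul, det_mul, ← hdetR]; ring
  have hCdet : A.det * C.det = B.det := by
    have hr : R.det ≠ 0 := isUnit_iff_ne_zero.mp hRu
    rw [hCdef, det_mul, det_mul, Matrix.det_nonsing_inv, Ring.inverse_eq_inv, ← hdetR]
    field_simp
  have heig := det_smul_one_add_smul hCpd.isHermitian a b
  have hCdetpos : 0 < C.det := hCpd.det_pos
  have hprod : C.det ^ b ≤ (a • (1 : Matrix (Fin n) (Fin n) ℝ) + b • C).det := by
    rw [heig]
    have hCdeteq : C.det = ∏ i, hCpd.isHermitian.eigenvalues i := by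
      simpa using hCpd.isHermitian.det_eq_prod_eigenvalues
    rw [hCdeteq, ← Real.finset_prod_rpow _ _ (fun i _ => (hCpd.eigenvalues_pos i).le) b]
    apply Finset.prod_le_prod
    · intro i _
      exact Real.rpow_nonneg (hCpd.eigenvalues_pos i).le b
    · intro i _
      have hgm := Real.geom_mean_le_arith_mean2_weighted ha hb zero_le_one
        (hCpd.eigenvalues_pos i).le hab
      simpa using hgm.trans_eq (by ring)
  have hApos := hA.det_pos
  have hlhs : A.det ^ a * B.det ^ b = A.det * C.det ^ b := by
    rw [← hCdet, Real.mul_rpow hApos.le hCdetpos.le, ← mul_assoc,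
      ← Real.rpow_add hApos, hab, Real.rpow_one]
  rw [hlhs, hdet]
  exact mul_le_mul_of_nonneg_left hprod hApos.le
end SplitCIF

open SplitCIF in
/-- The function `w ↦ det P(w)` for the split CIF is convex on `(0,1)`. -/
theorem split_cif_det_convex (n : ℕ) (hn : 0 < n)
    (P1d P1i P2d P2i : Matrix (Fin n) (Fin n) ℝ)
    (hP1d : P1d.PosSemidef) (hP1i : P1i.PosSemidef)
    (hP2d : P2d.PosSemidef) (hP2i : P2i.PosSemidef)
    (hpos : ∀ w ∈ Set.Ioo (0 : ℝ) 1,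
      ((1 / w) • P1d + P1i).PosDef ∧ ((1 / (1 - w)) • P2d + P2i).PosDef) :
    ConvexOn ℝ (Set.Ioo (0 : ℝ) 1)
      (fun w => ((((1 / w) • P1d + P1i)⁻¹ + ((1 / (1 - w)) • P2d + P2i)⁻¹)⁻¹).det) := by
  constructor
  · exact convex_Ioo 0 1
  intro s hs t ht a b ha hb hab
  have hwmem : a • s + b • t ∈ Set.Ioo (0:ℝ) 1 := (convex_Ioo (0:ℝ) 1) hs ht ha hb hab
  simp only [smul_eq_mul] at hwmem ⊢
  have heq : a*(1-s)+b*(1-t) = 1-(a*s+b*t) := by linear_combination hab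
  obtain ⟨hA1s, hA2s⟩ := hpos s hs
  obtain ⟨hA1t, hA2t⟩ := hpos t ht
  obtain ⟨hA1w, hA2w⟩ := hpos _ hwmem
  have hA2w' : ((1/(a*(1-s)+b*(1-t))) • P2d + P2i).PosDef := by rw [heq]; exact hA2w
  set Gs := ((1/s) • P1d + P1i)⁻¹ + ((1/(1-s)) • P2d + P2i)⁻¹ with hGs
  set Gt := ((1/t) • P1d + P1i)⁻¹ + ((1/(1-t)) • P2d + P2i)⁻¹ with hGt
  set Gw := ((1/(a*s+b*t)) • P1d + P1i)⁻¹ + ((1/(1-(a*s+b*t))) • P2d + P2i)⁻¹ with hGw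
  have hGsPD : Gs.PosDef := hA1s.inv.add hA2s.inv
  have hGtPD : Gt.PosDef := hA1t.inv.add hA2t.inv
  have hGwPD : Gw.PosDef := hA1w.inv.add hA2w.inv
  have hsub : (Gw - (a • Gs + b • Gt)).PosSemidef := by
    refine PosSemidef.of_dotProduct_mulVec_nonneg ?_ ?_
    · show _ᴴ = _
      simp only [conjTranspose_sub, conjTranspose_add, conjTranspose_smul, star_trivial,
        hGwPD.1.eq, hGsPD.1.eq, hGtPD.1.eq]
    · intro x
      simp only [star_trivial]
      have k1 := quad_key hP1d hP1i hs.1 ht.1 ha hb hab hA1s hA1t hA1w x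
      have k2 := quad_key hP2d hP2i (by linarith [hs.2] : (0:ℝ) < 1 - s)
        (by linarith [ht.2] : (0:ℝ) < 1 - t) ha hb hab hA2s hA2t hA2w' x
      rw [heq] at k2
      rw [hGw, hGs, hGt]
      simp only [sub_mulVec, add_mulVec, smul_mulVec, dotProduct_sub, dotProduct_add,
        dotProduct_smul, smul_eq_mul]
      linarith [k1, k2]
  have hcombo : (a • Gs + b • Gt).PosDef := combo_posDef hGsPD hGtPD ha hb hab
  have hmono : (a • Gs + b • Gt).det ≤ Gw.det := det_le_det_of_sub_psd hcombo hsub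
  have hgeo : Gs.det ^ a * Gt.det ^ b ≤ (a • Gs + b • Gt).det :=
    det_rpow_combo hGsPD hGtPD ha hb hab
  have e1 : (Gw⁻¹).det = Gw.det⁻¹ := by rw [Matrix.det_nonsing_inv, Ring.inverse_eq_inv]
  have e2 : (Gs⁻¹).det = Gs.det⁻¹ := by rw [Matrix.det_nonsing_inv, Ring.inverse_eq_inv]
  have e3 : (Gt⁻¹).det = Gt.det⁻¹ := by rw [Matrix.det_nonsing_inv, Ring.inverse_eq_inv]
  show (Gw⁻¹).det ≤ a * (Gs⁻¹).det + b * (Gt⁻¹).det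
  rw [e1, e2, e3]
  have hpos1 : 0 < Gs.det ^ a * Gt.det ^ b :=
    mul_pos (Real.rpow_pos_of_pos hGsPD.det_pos a) (Real.rpow_pos_of_pos hGtPD.det_pos b)
  have step1 : Gw.det⁻¹ ≤ (Gs.det ^ a * Gt.det ^ b)⁻¹ :=
    inv_anti₀ hpos1 (le_trans hgeo hmono)
  have step2 : (Gs.det ^ a * Gt.det ^ b)⁻¹ = Gs.det⁻¹ ^ a * Gt.det⁻¹ ^ b := by
    rw [mul_inv, ← Real.inv_rpow hGsPD.det_pos.le, ← Real.inv_rpow hGtPD.det_pos.le]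
  have step3 : Gs.det⁻¹ ^ a * Gt.det⁻¹ ^ b ≤ a * Gs.det⁻¹ + b * Gt.det⁻¹ :=
    Real.geom_mean_le_arith_mean2_weighted ha hb (inv_nonneg.mpr hGsPD.det_pos.le)
      (inv_nonneg.mpr hGtPD.det_pos.le) hab
  linarith [step1, step2 ▸ step1, step3]
end

section
/- Let n be a positive integer and let P1d, P1i, P2d, P2i be n×n real symmetric positive semidefinite matrices. For w ∈ (0,1) define P₁(w) = (1/w)·P1d + P1i, P₂(w) = (1/(1−w))·P2d + P2i, and P(w) = (P₁(w)⁻¹ + P₂(w)⁻¹)⁻¹. Assume P₁(w) and P₂(w) are positive definite for every w ∈ (0,1). Then the function w ↦ log det(P(w)) is convex on the open interval (0,1). -/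
open Matrix

section SplitCifAux

variable {n : ℕ}

private lemma dot_symm' {A : Matrix (Fin n) (Fin n) ℝ} (hA : A.IsHermitian)
    (x y : Fin n → ℝ) : x ⬝ᵥ A *ᵥ y = y ⬝ᵥ A *ᵥ x := by
  have hAT : Aᵀ = A := by simpa [Matrix.conjTranspose_eq_transpose_of_trivial] using hA.eq
  rw [dotProduct_mulVec, ← mulVec_transpose, hAT, dotProduct_comm]

private lemma posDef_smul' {M : Matrix (Fin n) (Fin n) ℝ} (hM : M.PosDef) {a : ℝ}
    (ha : 0 < a) : (a • M).PosDef := by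
  refine Matrix.PosDef.of_dotProduct_mulVec_pos ?_ (fun x hx => ?_)
  · show (a • M)ᴴ = a • M
    rw [conjTranspose_smul, hM.1.eq]
    simp
  · have := hM.dotProduct_mulVec_pos hx
    simp only [star_trivial, smul_mulVec, dotProduct_smul, smul_eq_mul] at *
    exact mul_pos ha this

private lemma key_ineq' {A B : Matrix (Fin n) (Fin n) ℝ} (hA : A.PosSemidef) (hB : B.PosSemidef)
    {w u : ℝ} (hu : 0 < u)
    (hMw : ((1/w) • A + B).PosDef) (hMu : ((1/u) • A + B).PosDef) (x : Fin n → ℝ) :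
    x ⬝ᵥ ((1/u) • A + B)⁻¹ *ᵥ x ≤
      u * (((1/w) • (((1/w) • A + B)⁻¹ *ᵥ x)) ⬝ᵥ A *ᵥ ((1/w) • (((1/w) • A + B)⁻¹ *ᵥ x)))
      + ((((1/w) • A + B)⁻¹ *ᵥ x) ⬝ᵥ B *ᵥ ((((1/w) • A + B)⁻¹ *ᵥ x))) := by
  set Mw := (1/w) • A + B with hMwdef
  set Mu := (1/u) • A + B with hMudef
  set p := Mw⁻¹ *ᵥ x with hp
  set q := Mu⁻¹ *ᵥ x with hq
  have hxw : Mw *ᵥ p = x := by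
    rw [hp, mulVec_mulVec, mul_nonsing_inv _ hMw.det_pos.ne'.isUnit, one_mulVec]
  have hxu : Mu *ᵥ q = x := by
    rw [hq, mulVec_mulVec, mul_nonsing_inv _ hMu.det_pos.ne'.isUnit, one_mulVec]
  have e1 : p ⬝ᵥ A *ᵥ q = q ⬝ᵥ A *ᵥ p := dot_symm' hA.isHermitian p q
  have e2 : p ⬝ᵥ B *ᵥ q = q ⬝ᵥ B *ᵥ p := dot_symm' hB.isHermitian p q
  have hlhs : x ⬝ᵥ q = q ⬝ᵥ Mw *ᵥ p := by rw [← hxw]; exact dotProduct_comm _ _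
  have hAB : A + u • B = u • Mu := by
    rw [hMudef, smul_add, smul_smul, mul_one_div_cancel hu.ne', one_smul]
  have hcon : q ⬝ᵥ A *ᵥ q + u * (q ⬝ᵥ B *ᵥ q)
      = u * ((1/w) * (q ⬝ᵥ A *ᵥ p)) + u * (q ⬝ᵥ B *ᵥ p) := by
    have h' : q ⬝ᵥ (A + u • B) *ᵥ q = u * (q ⬝ᵥ Mw *ᵥ p) := by
      rw [hAB, smul_mulVec, dotProduct_smul, smul_eq_mul, hxu, ← hxw]
    simp only [hMwdef, add_mulVec, smul_mulVec, dotProduct_add, dotProduct_smul,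
      smul_eq_mul, mul_add] at h'
    linarith [h']
  have h1 : 0 ≤ (u • ((1/w) • p) - q) ⬝ᵥ A *ᵥ (u • ((1/w) • p) - q) := by
    simpa using hA.dotProduct_mulVec_nonneg (u • ((1/w) • p) - q)
  have h2 : 0 ≤ (p - q) ⬝ᵥ B *ᵥ (p - q) := by simpa using hB.dotProduct_mulVec_nonneg (p - q)
  have main : u * (u * (((1/w) • p) ⬝ᵥ A *ᵥ ((1/w) • p)) + p ⬝ᵥ B *ᵥ p)
      - u * (q ⬝ᵥ Mw *ᵥ p)
      = (u • ((1/w) • p) - q) ⬝ᵥ A *ᵥ (u • ((1/w) • p) - q)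
        + u * ((p - q) ⬝ᵥ B *ᵥ (p - q)) := by
    simp only [hMwdef, add_mulVec, smul_mulVec, mulVec_smul, sub_dotProduct,
      dotProduct_sub, dotProduct_add, dotProduct_smul, smul_dotProduct, mulVec_sub,
      smul_eq_mul]
    linear_combination (-1 : ℝ) * hcon + (u * (1/w)) * e1 + u * e2
  have hfin : u * (x ⬝ᵥ q) ≤
      u * (u * (((1/w) • p) ⬝ᵥ A *ᵥ ((1/w) • p)) + p ⬝ᵥ B *ᵥ p) := by
    rw [hlhs]
    nlinarith [mul_nonneg hu.le h2]
  exact le_of_mul_le_mul_left hfin hu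

private lemma key_eq' {A B : Matrix (Fin n) (Fin n) ℝ}
    {w : ℝ} (hw : 0 < w) (hMw : ((1/w) • A + B).PosDef) (x : Fin n → ℝ) :
    x ⬝ᵥ ((1/w) • A + B)⁻¹ *ᵥ x =
      w * (((1/w) • (((1/w) • A + B)⁻¹ *ᵥ x)) ⬝ᵥ A *ᵥ ((1/w) • (((1/w) • A + B)⁻¹ *ᵥ x)))
      + ((((1/w) • A + B)⁻¹ *ᵥ x) ⬝ᵥ B *ᵥ ((((1/w) • A + B)⁻¹ *ᵥ x))) := by
  set Mw := (1/w) • A + B with hMwdef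
  set p := Mw⁻¹ *ᵥ x with hp
  have hxw : Mw *ᵥ p = x := by
    rw [hp, mulVec_mulVec, mul_nonsing_inv _ hMw.det_pos.ne'.isUnit, one_mulVec]
  have hlhs : x ⬝ᵥ p = p ⬝ᵥ Mw *ᵥ p := by rw [← hxw]; exact dotProduct_comm _ _
  rw [hlhs]
  simp only [hMwdef, add_mulVec, smul_mulVec, mulVec_smul, dotProduct_add,
    dotProduct_smul, smul_eq_mul]
  field_simp
  simp only [smul_dotProduct, dotProduct_smul, smul_mulVec, mulVec_smul, smul_eq_mul]
  rw [mul_add, ← mul_assoc, mul_one_div_cancel hw.ne', one_mul]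

private lemma det_smul_one_add_smul' {Q : Matrix (Fin n) (Fin n) ℝ} (hQ : Q.IsHermitian)
    (c d : ℝ) :
    (c • (1 : Matrix (Fin n) (Fin n) ℝ) + d • Q).det
      = ∏ i, (c + d * hQ.eigenvalues i) := by
  set U : Matrix (Fin n) (Fin n) ℝ := (hQ.eigenvectorUnitary : Matrix (Fin n) (Fin n) ℝ)
  have hU : U * star U = 1 := (Matrix.mem_unitaryGroup_iff).mp hQ.eigenvectorUnitary.2
  have h1 : c • (1 : Matrix (Fin n) (Fin n) ℝ) + d • Q
      = U * (c • 1 + d • diagonal (RCLike.ofReal ∘ hQ.eigenvalues)) * star U := by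
    rw [Matrix.mul_add, Matrix.add_mul, Matrix.mul_smul, Matrix.mul_smul, Matrix.smul_mul,
      Matrix.smul_mul, Matrix.mul_one, hU]
    conv_lhs => rw [hQ.spectral_theorem]
    rw [Unitary.conjStarAlgAut_apply]
  rw [h1, Matrix.det_mul_right_comm, hU, Matrix.one_mul]
  have : c • (1 : Matrix (Fin n) (Fin n) ℝ) + d • diagonal (RCLike.ofReal ∘ hQ.eigenvalues)
      = diagonal (fun i => c + d * hQ.eigenvalues i) := by
    ext i j
    by_cases h : i = j <;> simp [Matrix.diagonal, Matrix.one_apply, h, mul_comm]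
  rw [this, Matrix.det_diagonal]

open scoped MatrixOrder in
private lemma sqrt_facts' {A : Matrix (Fin n) (Fin n) ℝ} (hA : A.PosDef) :
    ∃ R : Matrix (Fin n) (Fin n) ℝ, R.IsHermitian ∧ R * R = A ∧ IsUnit R.det := by
  refine ⟨CFC.sqrt A, (CFC.sqrt_nonneg A).posSemidef.isHermitian,
    CFC.sqrt_mul_sqrt_self A hA.posSemidef.nonneg, ?_⟩
  have h : (CFC.sqrt A).det * (CFC.sqrt A).det = A.det := by
    rw [← Matrix.det_mul, CFC.sqrt_mul_sqrt_self A hA.posSemidef.nonneg]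
  have := hA.det_pos
  refine isUnit_iff_ne_zero.mpr fun h0 => ?_
  rw [h0, mul_zero] at h; linarith [h ▸ this]

private lemma conj_inv_posSemidef' {E R : Matrix (Fin n) (Fin n) ℝ} (hR : R.IsHermitian)
    (hE : E.PosSemidef) : (R⁻¹ * E * R⁻¹).PosSemidef := by
  have := hE.conjTranspose_mul_mul_same (R⁻¹)
  rwa [hR.inv.eq] at this

private lemma det_le_det_add_posSemidef' {A E : Matrix (Fin n) (Fin n) ℝ}
    (hA : A.PosDef) (hE : E.PosSemidef) :
    A.det ≤ (A + E).det := by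
  obtain ⟨R, hRH, hRR, hRu⟩ := sqrt_facts' hA
  have hQ : (R⁻¹ * E * R⁻¹).PosSemidef := conj_inv_posSemidef' hRH hE
  set Q := R⁻¹ * E * R⁻¹ with hQdef
  have hsplit : A + E = R * (1 + Q) * R := by
    rw [Matrix.mul_add, Matrix.add_mul, Matrix.mul_one, hRR, hQdef]
    congr 1
    rw [Matrix.mul_assoc, Matrix.mul_assoc, Matrix.nonsing_inv_mul _ hRu, Matrix.mul_one,
      ← Matrix.mul_assoc, Matrix.mul_nonsing_inv _ hRu, Matrix.one_mul]
  have hdet : (A + E).det = A.det * (1 + Q).det := by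
    rw [hsplit, Matrix.det_mul, Matrix.det_mul, ← hRR, Matrix.det_mul]; ring
  have h1 : (1 + Q).det = ∏ i, (1 + 1 * hQ.isHermitian.eigenvalues i) := by
    rw [← det_smul_one_add_smul' hQ.isHermitian 1 1, one_smul, one_smul]
  have h2 : (1 : ℝ) ≤ (1 + Q).det := by
    rw [h1]
    have := Finset.prod_le_prod (s := Finset.univ) (f := fun _ : Fin n => (1:ℝ))
      (g := fun i => 1 + 1 * hQ.isHermitian.eigenvalues i)
      (fun i _ => zero_le_one) (fun i _ => by simpa using hQ.eigenvalues_nonneg i)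
    simpa using this
  rw [hdet]
  exact le_mul_of_one_le_right hA.det_pos.le h2

private lemma log_det_concave2' {A B : Matrix (Fin n) (Fin n) ℝ}
    (hA : A.PosDef) (hB : B.PosDef) {a b : ℝ}
    (ha : 0 < a) (hb : 0 < b) (hab : a + b = 1) :
    a * Real.log A.det + b * Real.log B.det ≤ Real.log (a • A + b • B).det := by
  obtain ⟨R, hRH, hRR, hRu⟩ := sqrt_facts' hA
  have hQ : (R⁻¹ * B * R⁻¹).PosSemidef := conj_inv_posSemidef' hRH hB.posSemidef
  set Q := R⁻¹ * B * R⁻¹ with hQdef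
  have hRQR : R * Q * R = B := by
    rw [hQdef, Matrix.mul_assoc, Matrix.mul_assoc, Matrix.nonsing_inv_mul _ hRu, Matrix.mul_one,
      ← Matrix.mul_assoc, Matrix.mul_nonsing_inv _ hRu, Matrix.one_mul]
  have hsplit : a • A + b • B = R * (a • 1 + b • Q) * R := by
    rw [Matrix.mul_add, Matrix.add_mul, Matrix.mul_smul, Matrix.smul_mul, Matrix.mul_one, hRR,
      Matrix.mul_smul, Matrix.smul_mul, hRQR]
  have hdetQ : Q.det = B.det / A.det := by
    rw [hQdef, Matrix.det_mul, Matrix.det_mul, Matrix.det_nonsing_inv, Ring.inverse_eq_inv,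
      ← hRR, Matrix.det_mul]
    have hRne : R.det ≠ 0 := hRu.ne_zero
    field_simp
  have hdet : (a • A + b • B).det = A.det * ∏ i, (a + b * hQ.isHermitian.eigenvalues i) := by
    rw [hsplit, Matrix.det_mul, Matrix.det_mul, det_smul_one_add_smul' hQ.isHermitian a b,
      ← hRR, Matrix.det_mul]; ring
  have hprod : Q.det ^ b ≤ ∏ i, (a + b * hQ.isHermitian.eigenvalues i) := by
    have h1 : ∀ i ∈ Finset.univ, hQ.isHermitian.eigenvalues i ^ b
        ≤ a + b * hQ.isHermitian.eigenvalues i := by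
      intro i _
      have h := Real.geom_mean_le_arith_mean2_weighted ha.le hb.le zero_le_one
        (hQ.eigenvalues_nonneg i) hab
      simpa using h
    calc Q.det ^ b = (∏ i, hQ.isHermitian.eigenvalues i) ^ b := by
          rw [hQ.isHermitian.det_eq_prod_eigenvalues]; norm_num
      _ = ∏ i, hQ.isHermitian.eigenvalues i ^ b :=
          (Real.finset_prod_rpow Finset.univ _ (fun i _ => hQ.eigenvalues_nonneg i) b).symm
      _ ≤ _ := Finset.prod_le_prod (fun i _ => Real.rpow_nonneg (hQ.eigenvalues_nonneg i) b) h1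
  have hQdetpos : 0 < Q.det := by
    rw [hdetQ]; exact div_pos hB.det_pos hA.det_pos
  have hge : A.det * Q.det ^ b ≤ (a • A + b • B).det := by
    rw [hdet]
    exact mul_le_mul_of_nonneg_left hprod hA.det_pos.le
  have hlog := Real.log_le_log (mul_pos hA.det_pos (Real.rpow_pos_of_pos hQdetpos b)) hge
  rw [Real.log_mul hA.det_pos.ne' (by positivity), Real.log_rpow hQdetpos, hdetQ,
    Real.log_div hB.det_pos.ne' hA.det_pos.ne'] at hlog
  have h2 : a * Real.log A.det = Real.log A.det - b * Real.log A.det := by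
    rw [show a = 1 - b by linarith]; ring
  linarith

end SplitCifAux

/-- The function `w ↦ log det P(w)` for the split CIF is convex on `(0,1)`. -/
theorem split_cif_log_det_convex (n : ℕ) (hn : 0 < n)
    (P1d P1i P2d P2i : Matrix (Fin n) (Fin n) ℝ)
    (hP1d : P1d.PosSemidef) (hP1i : P1i.PosSemidef)
    (hP2d : P2d.PosSemidef) (hP2i : P2i.PosSemidef)
    (hpos : ∀ w ∈ Set.Ioo (0 : ℝ) 1,
      ((1 / w) • P1d + P1i).PosDef ∧ ((1 / (1 - w)) • P2d + P2i).PosDef) :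
    ConvexOn ℝ (Set.Ioo (0 : ℝ) 1)
      (fun w =>
        Real.log ((((1 / w) • P1d + P1i)⁻¹ + ((1 / (1 - w)) • P2d + P2i)⁻¹)⁻¹).det) := by
  set S : ℝ → Matrix (Fin n) (Fin n) ℝ :=
    fun w => ((1 / w) • P1d + P1i)⁻¹ + ((1 / (1 - w)) • P2d + P2i)⁻¹ with hSdef
  have hS : ∀ w ∈ Set.Ioo (0:ℝ) 1, (S w).PosDef := fun w hw =>
    ((hpos w hw).1.inv).add ((hpos w hw).2.inv)
  refine ⟨convex_Ioo 0 1, ?_⟩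
  intro u hu v hv a b ha hb hab
  rcases ha.eq_or_lt with rfl | ha'
  · have hb1 : b = 1 := by linarith
    subst hb1; simp
  rcases hb.eq_or_lt with rfl | hb'
  · have ha1 : a = 1 := by linarith
    subst ha1; simp
  have hwmem : a • u + b • v ∈ Set.Ioo (0:ℝ) 1 := (convex_Ioo 0 1) hu hv ha hb hab
  set wb : ℝ := a • u + b • v with hwb
  have hwb' : wb = a * u + b * v := by simp [hwb, smul_eq_mul]
  have hwpos : 0 < wb := hwmem.1
  have hupos : 0 < u := hu.1
  have hvpos : 0 < v := hv.1
  have h1u : 0 < 1 - u := by linarith [hu.2]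
  have h1v : 0 < 1 - v := by linarith [hv.2]
  have h1w : 0 < 1 - wb := by linarith [hwmem.2]
  -- Loewner concavity: quadratic forms
  have hloew : ∀ x : Fin n → ℝ,
      a * (x ⬝ᵥ S u *ᵥ x) + b * (x ⬝ᵥ S v *ᵥ x) ≤ x ⬝ᵥ S wb *ᵥ x := by
    intro x
    have k1u := key_ineq' hP1d hP1i hupos (hpos wb hwmem).1 (hpos u hu).1 x
    have k1v := key_ineq' hP1d hP1i hvpos (hpos wb hwmem).1 (hpos v hv).1 x
    have k1w := key_eq' hwpos (hpos wb hwmem).1 x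
    have k2u := key_ineq' hP2d hP2i h1u (hpos wb hwmem).2 (hpos u hu).2 x
    have k2v := key_ineq' hP2d hP2i h1v (hpos wb hwmem).2 (hpos v hv).2 x
    have k2w := key_eq' h1w (hpos wb hwmem).2 x
    simp only [hSdef, add_mulVec, dotProduct_add]
    set A1 := ((1 / wb) • (((1 / wb) • P1d + P1i)⁻¹ *ᵥ x)) ⬝ᵥ
      P1d *ᵥ ((1 / wb) • (((1 / wb) • P1d + P1i)⁻¹ *ᵥ x)) with hA1
    set B1 := (((1 / wb) • P1d + P1i)⁻¹ *ᵥ x) ⬝ᵥ P1i *ᵥ (((1 / wb) • P1d + P1i)⁻¹ *ᵥ x) with hB1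
    set A2 := ((1 / (1 - wb)) • (((1 / (1 - wb)) • P2d + P2i)⁻¹ *ᵥ x)) ⬝ᵥ
      P2d *ᵥ ((1 / (1 - wb)) • (((1 / (1 - wb)) • P2d + P2i)⁻¹ *ᵥ x)) with hA2
    set B2 := (((1 / (1 - wb)) • P2d + P2i)⁻¹ *ᵥ x) ⬝ᵥ
      P2i *ᵥ (((1 / (1 - wb)) • P2d + P2i)⁻¹ *ᵥ x) with hB2
    set L1u := x ⬝ᵥ ((1 / u) • P1d + P1i)⁻¹ *ᵥ x with hL1u
    set L1v := x ⬝ᵥ ((1 / v) • P1d + P1i)⁻¹ *ᵥ x with hL1v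
    set L1w := x ⬝ᵥ ((1 / wb) • P1d + P1i)⁻¹ *ᵥ x with hL1w
    set L2u := x ⬝ᵥ ((1 / (1 - u)) • P2d + P2i)⁻¹ *ᵥ x with hL2u
    set L2v := x ⬝ᵥ ((1 / (1 - v)) • P2d + P2i)⁻¹ *ᵥ x with hL2v
    set L2w := x ⬝ᵥ ((1 / (1 - wb)) • P2d + P2i)⁻¹ *ᵥ x with hL2w
    have f1 := mul_le_mul_of_nonneg_left k1u ha
    have f2 := mul_le_mul_of_nonneg_left k1v hb
    have f3 := mul_le_mul_of_nonneg_left k2u ha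
    have f4 := mul_le_mul_of_nonneg_left k2v hb
    have hgB1 : a * B1 + b * B1 = B1 := by rw [← add_mul, hab, one_mul]
    have hgB2 : a * B2 + b * B2 = B2 := by rw [← add_mul, hab, one_mul]
    have hw1 : wb * A1 = a * (u * A1) + b * (v * A1) := by rw [hwb']; ring
    have hw2 : (1 - wb) * A2 = a * ((1 - u) * A2) + b * ((1 - v) * A2) := by
      rw [hwb']; linear_combination (-A2 : ℝ) * hab
    linarith [f1, f2, f3, f4, k1w, k2w, hgB1, hgB2, hw1, hw2]
  -- positive definiteness of the convex combination
  have hCpd : (a • S u + b • S v).PosDef :=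
    (posDef_smul' (hS u hu) ha').add (posDef_smul' (hS v hv) hb')
  -- the difference is PSD
  have hEpsd : (S wb - (a • S u + b • S v)).PosSemidef := by
    refine Matrix.PosSemidef.of_dotProduct_mulVec_nonneg
      (((hS wb hwmem).isHermitian).sub hCpd.isHermitian) fun x => ?_
    have := hloew x
    simp only [star_trivial, sub_mulVec, add_mulVec, dotProduct_sub, dotProduct_add,
      smul_mulVec, dotProduct_smul, smul_eq_mul]
    linarith
  have hdmono : (a • S u + b • S v).det ≤ (S wb).det := by
    have := det_le_det_add_posSemidef' hCpd hEpsd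
    rwa [add_sub_cancel] at this
  have hconc := log_det_concave2' (hS u hu) (hS v hv) ha' hb' hab
  have hlogmono := Real.log_le_log hCpd.det_pos hdmono
  have hrw : ∀ w, Real.log ((S w)⁻¹).det = - Real.log (S w).det := by
    intro w
    rw [Matrix.det_nonsing_inv, Ring.inverse_eq_inv, Real.log_inv]
  have goal' : Real.log ((S wb)⁻¹).det
      ≤ a * Real.log ((S u)⁻¹).det + b * Real.log ((S v)⁻¹).det := by
    rw [hrw, hrw, hrw]
    linarith [hconc, hlogmono]
  simpa only [smul_eq_mul] using goal'
end

section
/- (Lemma 2, second derivative of log-determinant.) Let M : ℝ → Matrix n n ℝ be twice differentiable at a point w with M(w′) positive definite for all w′ in a neighborhood of w. Then d²/dw² [log det(M(w))] = tr(−M(w)⁻¹ M′(w) M(w)⁻¹ M′(w) + M(w)⁻¹ M″(w)), where M′ and M″ denote the first and second derivatives of M. -/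
attribute [local instance] Matrix.frobeniusNormedAddCommGroup Matrix.frobeniusNormedSpace

open Matrix Finset

private lemma jacobi {n : ℕ} {M : ℝ → Matrix (Fin n) (Fin n) ℝ} {B : Matrix (Fin n) (Fin n) ℝ}
    {x : ℝ} (h : ∀ i j, HasDerivAt (fun t => M t i j) (B i j) x) :
    HasDerivAt (fun t => (M t).det) ((Matrix.adjugate (M x) * B).trace) x := by
  have key : ∀ σ : Equiv.Perm (Fin n), HasDerivAt (fun t => ∏ i, M t (σ i) i)
      (∑ i, (∏ j ∈ Finset.univ.erase i, M x (σ j) j) • B (σ i) i) x :=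
    fun σ => HasDerivAt.fun_finsetProd (fun i _ => h (σ i) i)
  have h1 : HasDerivAt (fun t => (M t).det)
      (∑ σ : Equiv.Perm (Fin n), (Equiv.Perm.sign σ : ℝ) *
        ∑ i, (∏ j ∈ Finset.univ.erase i, M x (σ j) j) • B (σ i) i) x := by
    have := HasDerivAt.fun_sum (u := Finset.univ)
      (A := fun (σ : Equiv.Perm (Fin n)) t => (Equiv.Perm.sign σ : ℝ) * ∏ i, M t (σ i) i)
      (A' := fun σ => (Equiv.Perm.sign σ : ℝ) *
        ∑ i, (∏ j ∈ Finset.univ.erase i, M x (σ j) j) • B (σ i) i)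
      (fun σ _ => (key σ).const_mul _)
    refine this.congr_of_eventuallyEq (Filter.Eventually.of_forall fun t => ?_)
    · exact (Matrix.det_apply' (M t)).trans rfl
  convert h1 using 1
  have step : ∀ i : Fin n,
      ((M x).updateCol i (fun k => B k i)).det
        = ∑ σ : Equiv.Perm (Fin n), (Equiv.Perm.sign σ : ℝ) *
            ((∏ j ∈ Finset.univ.erase i, M x (σ j) j) * B (σ i) i) := by
    intro i
    rw [Matrix.det_apply']
    refine Finset.sum_congr rfl fun σ _ => ?_
    congr 1
    rw [← Finset.mul_prod_erase Finset.univ _ (Finset.mem_univ i)]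
    rw [Matrix.updateCol_apply, if_pos rfl, mul_comm]
    congr 1
    refine Finset.prod_congr rfl fun j hj => ?_
    rw [Matrix.updateCol_apply, if_neg (Finset.ne_of_mem_erase hj)]
  calc (Matrix.adjugate (M x) * B).trace
      = ∑ i, ((Matrix.adjugate (M x)) *ᵥ (fun k => B k i)) i := by
        simp [Matrix.trace, Matrix.mul_apply, Matrix.diag, Matrix.mulVec, dotProduct]
    _ = ∑ i, ((M x).updateCol i (fun k => B k i)).det := by
        refine Finset.sum_congr rfl fun i _ => ?_
        rw [← Matrix.cramer_eq_adjugate_mulVec, Matrix.cramer_apply]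
    _ = ∑ σ : Equiv.Perm (Fin n), (Equiv.Perm.sign σ : ℝ) *
          ∑ i, (∏ j ∈ Finset.univ.erase i, M x (σ j) j) • B (σ i) i := by
        simp only [step, smul_eq_mul, Finset.mul_sum]
        rw [Finset.sum_comm]

private noncomputable def entryCLM {n : ℕ} (i j : Fin n) :
    Matrix (Fin n) (Fin n) ℝ →L[ℝ] ℝ :=
  LinearMap.toContinuousLinearMap
    { toFun := fun A => A i j, map_add' := fun _ _ => rfl, map_smul' := fun _ _ => rfl }

private lemma hasDerivAt_entry {n : ℕ} {M : ℝ → Matrix (Fin n) (Fin n) ℝ}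
    {B : Matrix (Fin n) (Fin n) ℝ} {x : ℝ} (h : HasDerivAt M B x) (i j : Fin n) :
    HasDerivAt (fun t => M t i j) (B i j) x := by
  have := (entryCLM i j).hasFDerivAt.comp_hasDerivAt x h
  exact this

private lemma hasDerivAt_adjugate_entry {n : ℕ} {M : ℝ → Matrix (Fin n) (Fin n) ℝ}
    {B : Matrix (Fin n) (Fin n) ℝ} {x : ℝ}
    (h : ∀ k l, HasDerivAt (fun t => M t k l) (B k l) x) (i j : Fin n) :
    HasDerivAt (fun t => Matrix.adjugate (M t) i j)
      ((Matrix.adjugate ((M x).updateRow j (Pi.single i 1)) * (B.updateRow j 0)).trace) x := by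
  simp only [Matrix.adjugate_apply]
  exact jacobi (M := fun t => (M t).updateRow j (Pi.single i 1)) (fun k l => by
    by_cases hk : k = j
    · subst hk
      simp only [Matrix.updateRow_apply, if_pos rfl, Matrix.zero_apply]
      exact hasDerivAt_const _ _
    · simp only [Matrix.updateRow_apply, if_neg hk]
      exact h k l)

private lemma hasDerivAt_logdet {n : ℕ} {M : ℝ → Matrix (Fin n) (Fin n) ℝ} {x : ℝ}
    (hd : DifferentiableAt ℝ M x) (h0 : (M x).det ≠ 0) :
    HasDerivAt (fun t => Real.log (M t).det) (((M x)⁻¹ * deriv M x).trace) x := by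
  have hdet := jacobi (fun i j => hasDerivAt_entry hd.hasDerivAt i j)
  have hl := hdet.log h0
  convert hl using 1
  rw [Matrix.inv_def, Ring.inverse_eq_inv', Matrix.smul_mul, Matrix.trace_smul]
  rw [smul_eq_mul, div_eq_inv_mul]
  rfl

private lemma sum_sum_eq_trace {n : ℕ} (P Q : Matrix (Fin n) (Fin n) ℝ) :
    ∑ i, ∑ j, P i j * Q j i = (P * Q).trace := by
  simp [Matrix.trace, Matrix.diag, Matrix.mul_apply]

private lemma hasDerivAt_inv_entry {n : ℕ} {M : ℝ → Matrix (Fin n) (Fin n) ℝ} {w : ℝ}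
    (hM1 : ∀ᶠ x in nhds w, DifferentiableAt ℝ M x)
    (hpos : ∀ᶠ x in nhds w, (M x).PosDef) (i j : Fin n) :
    HasDerivAt (fun x => (M x)⁻¹ i j)
      ((-((M w)⁻¹ * deriv M w * (M w)⁻¹)) i j) w := by
  have hdet0 : ∀ᶠ x in nhds w, (M x).det ≠ 0 := hpos.mono fun x hx => ne_of_gt hx.det_pos
  have hMw : HasDerivAt M (deriv M w) w := hM1.self_of_nhds.hasDerivAt
  have hent : ∀ k l, HasDerivAt (fun t => M t k l) (deriv M w k l) w :=
    fun k l => hasDerivAt_entry hMw k l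
  have hdw : (M w).det ≠ 0 := hdet0.self_of_nhds
  have hdiff : ∀ k l, DifferentiableAt ℝ (fun x => (M x)⁻¹ k l) w := by
    intro k l
    have h1 : DifferentiableAt ℝ (fun x => (M x).det) w := (jacobi hent).differentiableAt
    have h2 : DifferentiableAt ℝ (fun x => Matrix.adjugate (M x) k l) w :=
      (hasDerivAt_adjugate_entry hent k l).differentiableAt
    have h3 := (h1.inv hdw).mul h2
    have heq : (fun x => (M x)⁻¹ k l) = fun x => ((M x).det)⁻¹ * Matrix.adjugate (M x) k l := by
      funext x
      rw [Matrix.inv_def, Ring.inverse_eq_inv']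
      simp [Matrix.smul_apply]
    rw [heq]
    exact h3
  set A := M w with hA
  set Bm := deriv M w with hBm
  set F' : Matrix (Fin n) (Fin n) ℝ := Matrix.of fun k l => deriv (fun x => (M x)⁻¹ k l) w
    with hF'
  have hF : ∀ k l, HasDerivAt (fun x => (M x)⁻¹ k l) (F' k l) w :=
    fun k l => (hdiff k l).hasDerivAt
  have hid : F' * A + A⁻¹ * Bm = 0 := by
    ext i' j'
    have hconst : (fun x => ∑ k, (M x)⁻¹ i' k * M x k j')
        =ᶠ[nhds w] (fun _ => (1 : Matrix (Fin n) (Fin n) ℝ) i' j') := by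
      filter_upwards [hdet0] with x h0
      rw [← Matrix.mul_apply, Matrix.nonsing_inv_mul _ (isUnit_iff_ne_zero.2 h0)]
    have hL : HasDerivAt (fun x => ∑ k, (M x)⁻¹ i' k * M x k j')
        (∑ k, (F' i' k * A k j' + A⁻¹ i' k * Bm k j')) w :=
      HasDerivAt.fun_sum fun k _ => (hF i' k).mul (hent k j')
    have h0 : HasDerivAt (fun x => ∑ k, (M x)⁻¹ i' k * M x k j') 0 w :=
      (hasDerivAt_const w _).congr_of_eventuallyEq hconst
    have huniq := hL.unique h0
    simp only [Matrix.add_apply, Matrix.mul_apply, Matrix.zero_apply]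
    rw [Finset.sum_add_distrib] at huniq
    exact huniq
  have hmat : F' * A = -(A⁻¹ * Bm) := eq_neg_of_add_eq_zero_left hid
  have hAinv : A * A⁻¹ = 1 := Matrix.mul_nonsing_inv _ (isUnit_iff_ne_zero.2 hdw)
  have hfinal : F' = -(A⁻¹ * Bm * A⁻¹) := by
    calc F' = F' * (A * A⁻¹) := by rw [hAinv, mul_one]
      _ = (F' * A) * A⁻¹ := by rw [mul_assoc]
      _ = -(A⁻¹ * Bm) * A⁻¹ := by rw [hmat]
      _ = -(A⁻¹ * Bm * A⁻¹) := by rw [neg_mul]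
  have := hF i j
  rwa [hfinal] at this

/-- Lemma 2 (second derivative of the log-determinant): if `M` is twice differentiable at `w`
and positive definite near `w`, then
`d²/dw² log det M = tr (−M⁻¹ M′ M⁻¹ M′ + M⁻¹ M″)` at `w`. -/
theorem second_deriv_log_det (n : ℕ) (M : ℝ → Matrix (Fin n) (Fin n) ℝ) (w : ℝ)
    (hM1 : ∀ᶠ x in nhds w, DifferentiableAt ℝ M x)
    (hM2 : DifferentiableAt ℝ (deriv M) w)
    (hpos : ∀ᶠ x in nhds w, (M x).PosDef) :
    deriv (deriv (fun x => Real.log (M x).det)) w =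
      Matrix.trace (-((M w)⁻¹ * deriv M w * (M w)⁻¹ * deriv M w)
        + (M w)⁻¹ * deriv (deriv M) w) := by
  have hdet0 : ∀ᶠ x in nhds w, (M x).det ≠ 0 := hpos.mono fun x hx => ne_of_gt hx.det_pos
  have hg : deriv (fun x => Real.log (M x).det)
      =ᶠ[nhds w] fun x => (((M x)⁻¹ * deriv M x)).trace := by
    filter_upwards [hM1, hdet0] with x hx h0
    exact (hasDerivAt_logdet hx h0).deriv
  rw [Filter.EventuallyEq.deriv_eq hg]
  have hent2 : ∀ i j, HasDerivAt (fun x => deriv M x i j) (deriv (deriv M) w i j) w :=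
    fun i j => hasDerivAt_entry hM2.hasDerivAt i j
  have hinv : ∀ i j, HasDerivAt (fun x => (M x)⁻¹ i j)
      ((-((M w)⁻¹ * deriv M w * (M w)⁻¹)) i j) w := hasDerivAt_inv_entry hM1 hpos
  have hG : HasDerivAt (fun x => (((M x)⁻¹ * deriv M x)).trace)
      (∑ i, ∑ j, ((-((M w)⁻¹ * deriv M w * (M w)⁻¹)) i j * deriv M w j i
        + (M w)⁻¹ i j * deriv (deriv M) w j i)) w := by
    have hrw : (fun x => (((M x)⁻¹ * deriv M x)).trace)
        = fun x => ∑ i, ∑ j, (M x)⁻¹ i j * deriv M x j i := by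
      funext x
      rw [sum_sum_eq_trace]
    rw [hrw]
    exact HasDerivAt.fun_sum fun i _ => HasDerivAt.fun_sum fun j _ => (hinv i j).mul (hent2 j i)
  rw [hG.deriv]
  have expand : ∑ i, ∑ j, ((-((M w)⁻¹ * deriv M w * (M w)⁻¹)) i j * deriv M w j i
        + (M w)⁻¹ i j * deriv (deriv M) w j i)
      = ((-((M w)⁻¹ * deriv M w * (M w)⁻¹)) * deriv M w).trace
        + ((M w)⁻¹ * deriv (deriv M) w).trace := by
    simp only [Finset.sum_add_distrib, sum_sum_eq_trace]
  rw [expand, ← Matrix.trace_add]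
  congr 1
  rw [neg_mul]
end

section
/- (Lemma 5, key trace inequality.) Let X, Y, Z be n×n real symmetric matrices with X positive definite, Y − X positive semidefinite, Z positive semidefinite, and X − Z positive semidefinite. Then tr(2·X⁻¹Z − 2·Y⁻¹Z − X⁻¹ZX⁻¹Z + Y⁻¹ZY⁻¹Z) ≥ tr((X⁻¹ − Y⁻¹)·Z·(X⁻¹ − Y⁻¹)·Z). -/
open Matrix
open scoped MatrixOrder

/-- Trace of a product of two positive semidefinite real matrices is nonnegative. -/
lemma aux_trace_mul_nonneg {m : ℕ} {D S : Matrix (Fin m) (Fin m) ℝ}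
    (hD : D.PosSemidef) (hS : S.PosSemidef) : 0 ≤ (D * S).trace := by
  obtain ⟨P, hP⟩ := (CStarAlgebra.nonneg_iff_eq_star_mul_self.mp hD.nonneg :
    ∃ P : Matrix (Fin m) (Fin m) ℝ, D = Pᴴ * P)
  obtain ⟨Q, hQ⟩ := (CStarAlgebra.nonneg_iff_eq_star_mul_self.mp hS.nonneg :
    ∃ Q : Matrix (Fin m) (Fin m) ℝ, S = Qᴴ * Q)
  have h1 : (D * S).trace = ((P * Qᴴ)ᴴ * (P * Qᴴ)).trace := by
    rw [hP, hQ, Matrix.conjTranspose_mul, Matrix.conjTranspose_conjTranspose]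
    calc (Pᴴ * P * (Qᴴ * Q)).trace = (Qᴴ * Q * (Pᴴ * P)).trace :=
          (Matrix.trace_mul_comm _ _).symm
      _ = (Qᴴ * (Q * Pᴴ * P)).trace := by rw [Matrix.mul_assoc, Matrix.mul_assoc]
      _ = (Q * Pᴴ * P * Qᴴ).trace := Matrix.trace_mul_comm _ _
      _ = (Q * Pᴴ * (P * Qᴴ)).trace := by rw [Matrix.mul_assoc]
  rw [h1]
  have h2 : ((P * Qᴴ)ᴴ * (P * Qᴴ)).trace = ∑ j, ∑ i, ((P * Qᴴ) i j) ^ 2 := by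
    simp [Matrix.trace, Matrix.mul_apply, Matrix.diag, sq, Matrix.conjTranspose_apply,
      mul_comm]
  rw [h2]
  positivity

/-- helper: facts about the sqrt of a posdef matrix -/
lemma aux_sqrt_facts {m : ℕ} {X : Matrix (Fin m) (Fin m) ℝ} (hX : X.PosDef) :
    ∃ R : Matrix (Fin m) (Fin m) ℝ, R.PosSemidef ∧ R * R = X ∧
      R * R⁻¹ = 1 ∧ R⁻¹ * R = 1 ∧ (R⁻¹)ᴴ = R⁻¹ := by
  have hdet : IsUnit (CFC.sqrt X).det := by
    have h1 : (CFC.sqrt X).det * (CFC.sqrt X).det = X.det := by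
      rw [← Matrix.det_mul, CFC.sqrt_mul_sqrt_self X hX.posSemidef.nonneg]
    have h2 : X.det ≠ 0 := ne_of_gt hX.det_pos
    refine isUnit_iff_ne_zero.mpr fun h => h2 ?_
    rw [← h1, h]; ring
  refine ⟨CFC.sqrt X, (CFC.sqrt_nonneg X).posSemidef,
    CFC.sqrt_mul_sqrt_self X hX.posSemidef.nonneg, Matrix.mul_nonsing_inv _ hdet,
    Matrix.nonsing_inv_mul _ hdet, ?_⟩
  rw [Matrix.conjTranspose_nonsing_inv, (CFC.sqrt_nonneg X).posSemidef.isHermitian.eq]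

/-- helper: if `C` is PSD, `K` is its (two-sided) inverse and `K - 1` is PSD,
then `1 - C` is PSD. -/
lemma aux_one_sub_psd {m : ℕ} {C K : Matrix (Fin m) (Fin m) ℝ}
    (hC : C.PosSemidef) (hCK : C * K = 1) (hKC : K * C = 1)
    (hK1 : (K - 1).PosSemidef) : (1 - C).PosSemidef := by
  obtain ⟨L, hLps, hLL, hLH⟩ : ∃ L : Matrix (Fin m) (Fin m) ℝ,
      L.PosSemidef ∧ L * L = C ∧ Lᴴ = L :=
    ⟨CFC.sqrt C, (CFC.sqrt_nonneg C).posSemidef, CFC.sqrt_mul_sqrt_self C hC.nonneg,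
      (CFC.sqrt_nonneg C).posSemidef.isHermitian.eq⟩
  have hLC : L * C = C * L := by rw [← hLL]; noncomm_ring
  have hLK : L * K = K * L := by
    have h1 : K * (L * C) * K = K * (C * L) * K := by rw [hLC]
    calc L * K = (K * C) * L * K := by rw [hKC, one_mul]
      _ = K * (C * L) * K := by noncomm_ring
      _ = K * (L * C) * K := by rw [hLC]
      _ = K * L * (C * K) := by noncomm_ring
      _ = K * L := by rw [hCK, mul_one]
  have hLKL : L * K * L = 1 := by
    rw [hLK, Matrix.mul_assoc, hLL, hKC]
  have h1C : 1 - C = L * (K - 1) * L := by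
    calc 1 - C = L * K * L - L * L := by rw [hLKL, hLL]
      _ = L * (K - 1) * L := by noncomm_ring
  rw [h1C]
  have := hK1.conjTranspose_mul_mul_same L
  rwa [hLH] at this

/-- If `0 < X ≤ Y` then `Y⁻¹ ≤ X⁻¹`. -/
lemma aux_inv_sub_inv_psd {m : ℕ} {X Y : Matrix (Fin m) (Fin m) ℝ}
    (hX : X.PosDef) (hY : Y.PosDef) (hYX : (Y - X).PosSemidef) :
    (X⁻¹ - Y⁻¹).PosSemidef := by
  obtain ⟨R, hRpsd, hRR, hRi, hiR, hiH⟩ := aux_sqrt_facts hX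
  have hYdet : IsUnit Y.det := isUnit_iff_ne_zero.mpr (ne_of_gt hY.det_pos)
  have hYi : Y * Y⁻¹ = 1 := Matrix.mul_nonsing_inv _ hYdet
  have hiY : Y⁻¹ * Y = 1 := Matrix.nonsing_inv_mul _ hYdet
  have hC : (R * Y⁻¹ * R).PosSemidef := by
    have := (hY.posSemidef.inv).mul_mul_conjTranspose_same R
    rwa [hRpsd.isHermitian.eq] at this
  have hK1 : (R⁻¹ * Y * R⁻¹ - 1).PosSemidef := by
    have h1 : R⁻¹ * (Y - X) * (R⁻¹)ᴴ = R⁻¹ * Y * R⁻¹ - 1 := by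
      rw [hiH, Matrix.mul_sub, Matrix.sub_mul, ← hRR]
      congr 1
      calc R⁻¹ * (R * R) * R⁻¹ = (R⁻¹ * R) * (R * R⁻¹) := by noncomm_ring
        _ = 1 := by rw [hRi, hiR, one_mul]
    rw [← h1]
    exact hYX.mul_mul_conjTranspose_same R⁻¹
  have hCK : (R * Y⁻¹ * R) * (R⁻¹ * Y * R⁻¹) = 1 := by
    calc (R * Y⁻¹ * R) * (R⁻¹ * Y * R⁻¹)
        = R * Y⁻¹ * (R * R⁻¹) * Y * R⁻¹ := by noncomm_ring
      _ = R * (Y⁻¹ * Y) * R⁻¹ := by rw [hRi]; noncomm_ring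
      _ = 1 := by rw [hiY, mul_one, hRi]
  have hKC : (R⁻¹ * Y * R⁻¹) * (R * Y⁻¹ * R) = 1 := by
    calc (R⁻¹ * Y * R⁻¹) * (R * Y⁻¹ * R)
        = R⁻¹ * Y * (R⁻¹ * R) * Y⁻¹ * R := by noncomm_ring
      _ = R⁻¹ * (Y * Y⁻¹) * R := by rw [hiR]; noncomm_ring
      _ = 1 := by rw [hYi, mul_one, hiR]
  have h1Cpsd : (1 - R * Y⁻¹ * R).PosSemidef := aux_one_sub_psd hC hCK hKC hK1
  have hXinv : X⁻¹ = R⁻¹ * R⁻¹ := by rw [← hRR, Matrix.mul_inv_rev]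
  have hfinal : X⁻¹ - Y⁻¹ = R⁻¹ * (1 - R * Y⁻¹ * R) * (R⁻¹)ᴴ := by
    rw [hiH, Matrix.mul_sub, Matrix.sub_mul, mul_one, hXinv]
    congr 1
    calc Y⁻¹ = (R⁻¹ * R) * Y⁻¹ * (R * R⁻¹) := by rw [hRi, hiR, one_mul, mul_one]
      _ = R⁻¹ * (R * Y⁻¹ * R) * R⁻¹ := by noncomm_ring
  rw [hfinal]
  exact h1Cpsd.mul_mul_conjTranspose_same R⁻¹

/-- If `0 ≤ Z ≤ X` with `X` posdef, then `Z X⁻¹ Z ≤ Z`. -/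
lemma aux_Z_sub_ZXZ_psd {m : ℕ} {X Z : Matrix (Fin m) (Fin m) ℝ}
    (hX : X.PosDef) (hZ : Z.PosSemidef) (hXZ : (X - Z).PosSemidef) :
    (Z - Z * X⁻¹ * Z).PosSemidef := by
  obtain ⟨R, hRpsd, hRR, hRi, hiR, hiH⟩ := aux_sqrt_facts hX
  have hM : (R⁻¹ * Z * R⁻¹).PosSemidef := by
    have := hZ.mul_mul_conjTranspose_same R⁻¹
    rwa [hiH] at this
  have h1M : (1 - R⁻¹ * Z * R⁻¹).PosSemidef := by
    have h1 : R⁻¹ * (X - Z) * (R⁻¹)ᴴ = 1 - R⁻¹ * Z * R⁻¹ := by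
      rw [hiH, Matrix.mul_sub, Matrix.sub_mul, ← hRR]
      congr 1
      calc R⁻¹ * (R * R) * R⁻¹ = (R⁻¹ * R) * (R * R⁻¹) := by noncomm_ring
        _ = 1 := by rw [hRi, hiR, one_mul]
    rw [← h1]
    exact hXZ.mul_mul_conjTranspose_same R⁻¹
  obtain ⟨Q, hQps, hQQ, hQH⟩ : ∃ Q : Matrix (Fin m) (Fin m) ℝ,
      Q.PosSemidef ∧ Q * Q = R⁻¹ * Z * R⁻¹ ∧ Qᴴ = Q :=
    ⟨CFC.sqrt (R⁻¹ * Z * R⁻¹), (CFC.sqrt_nonneg (R⁻¹ * Z * R⁻¹)).posSemidef, CFC.sqrt_mul_sqrt_self (R⁻¹ * Z * R⁻¹) hM.nonneg,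
      (CFC.sqrt_nonneg (R⁻¹ * Z * R⁻¹)).posSemidef.isHermitian.eq⟩
  have hXinv : X⁻¹ = R⁻¹ * R⁻¹ := by rw [← hRR, Matrix.mul_inv_rev]
  have hQ1 : Q * (1 - R⁻¹ * Z * R⁻¹) * Q
      = R⁻¹ * Z * R⁻¹ - (R⁻¹ * Z * R⁻¹) * (R⁻¹ * Z * R⁻¹) := by
    rw [← hQQ]; noncomm_ring
  have hRMR : R * (R⁻¹ * Z * R⁻¹) * R = Z := by
    calc R * (R⁻¹ * Z * R⁻¹) * R = (R * R⁻¹) * Z * (R⁻¹ * R) := by noncomm_ring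
      _ = Z := by rw [hRi, hiR, one_mul, mul_one]
  have hRMMR : R * ((R⁻¹ * Z * R⁻¹) * (R⁻¹ * Z * R⁻¹)) * R = Z * X⁻¹ * Z := by
    calc R * ((R⁻¹ * Z * R⁻¹) * (R⁻¹ * Z * R⁻¹)) * R
        = (R * R⁻¹) * Z * (R⁻¹ * R⁻¹) * Z * (R⁻¹ * R) := by noncomm_ring
      _ = Z * (R⁻¹ * R⁻¹) * Z := by rw [hRi, hiR, one_mul, mul_one]
      _ = Z * X⁻¹ * Z := by rw [hXinv]
  have hkey : Z - Z * X⁻¹ * Z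
      = R * (Q * (1 - R⁻¹ * Z * R⁻¹) * Q) * Rᴴ := by
    rw [hRpsd.isHermitian.eq, hQ1, Matrix.mul_sub, Matrix.sub_mul, hRMR, hRMMR]
  rw [hkey]
  refine Matrix.PosSemidef.mul_mul_conjTranspose_same ?_ R
  have := h1M.conjTranspose_mul_mul_same Q
  rwa [hQH] at this

/-- Lemma 5 (key trace inequality): for symmetric matrices with `0 < X ≤ Y` and `0 ≤ Z ≤ X`,
`tr(2X⁻¹Z − 2Y⁻¹Z − X⁻¹ZX⁻¹Z + Y⁻¹ZY⁻¹Z) ≥ tr((X⁻¹ − Y⁻¹)Z(X⁻¹ − Y⁻¹)Z)`. -/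
theorem key_trace_inequality (n : ℕ) (X Y Z : Matrix (Fin n) (Fin n) ℝ)
    (hXs : X.IsHermitian) (hYs : Y.IsHermitian) (hZs : Z.IsHermitian)
    (hX : X.PosDef) (hYX : (Y - X).PosSemidef)
    (hZ : Z.PosSemidef) (hXZ : (X - Z).PosSemidef) :
    Matrix.trace ((X⁻¹ - Y⁻¹) * Z * (X⁻¹ - Y⁻¹) * Z) ≤
      Matrix.trace ((2 : ℝ) • (X⁻¹ * Z) - (2 : ℝ) • (Y⁻¹ * Z)
        - X⁻¹ * Z * X⁻¹ * Z + Y⁻¹ * Z * Y⁻¹ * Z) := by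
  have hY : Y.PosDef := by
    have h := hX.add_posSemidef hYX
    rwa [add_sub_cancel] at h
  have hD : (X⁻¹ - Y⁻¹).PosSemidef := aux_inv_sub_inv_psd hX hY hYX
  have hS : (Z - Z * X⁻¹ * Z).PosSemidef := aux_Z_sub_ZXZ_psd hX hZ hXZ
  have h0 : 0 ≤ ((X⁻¹ - Y⁻¹) * (Z - Z * X⁻¹ * Z)).trace := aux_trace_mul_nonneg hD hS
  have hc : (Y⁻¹ * (Z * (X⁻¹ * Z))).trace = (X⁻¹ * (Z * (Y⁻¹ * Z))).trace := by
    calc (Y⁻¹ * (Z * (X⁻¹ * Z))).trace = ((Y⁻¹ * Z) * (X⁻¹ * Z)).trace := by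
          rw [Matrix.mul_assoc]
      _ = ((X⁻¹ * Z) * (Y⁻¹ * Z)).trace := Matrix.trace_mul_comm _ _
      _ = _ := by rw [Matrix.mul_assoc]
  have key : Matrix.trace ((2 : ℝ) • (X⁻¹ * Z) - (2 : ℝ) • (Y⁻¹ * Z)
        - X⁻¹ * Z * X⁻¹ * Z + Y⁻¹ * Z * Y⁻¹ * Z)
      = Matrix.trace ((X⁻¹ - Y⁻¹) * Z * (X⁻¹ - Y⁻¹) * Z)
        + 2 * ((X⁻¹ - Y⁻¹) * (Z - Z * X⁻¹ * Z)).trace := by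
    simp only [Matrix.sub_mul, Matrix.mul_sub, Matrix.trace_sub, Matrix.trace_add,
      Matrix.trace_smul, smul_eq_mul, Matrix.mul_assoc]
    rw [hc]
    ring
  linarith
end

section
/- Let X and Z be n×n real symmetric matrices with X positive definite, Z positive semidefinite, and X − Z positive semidefinite. Then Z − Z·X⁻¹·Z is positive semidefinite. -/
open Matrix

lemma fromBlocks_zero_posSemidef {n : ℕ} {A : Matrix (Fin n) (Fin n) ℝ} (hA : A.PosSemidef) :
    (Matrix.fromBlocks A 0 0 (0 : Matrix (Fin n) (Fin n) ℝ)).PosSemidef := by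
  refine Matrix.PosSemidef.of_dotProduct_mulVec_nonneg ?_ ?_
  · exact Matrix.IsHermitian.fromBlocks hA.1 (by simp) (by simp)
  · intro x
    have := hA.dotProduct_mulVec_nonneg (x ∘ Sum.inl)
    simpa [Matrix.fromBlocks_mulVec, Matrix.dotProduct_block] using this

lemma fromBlocks_rep_posSemidef {n : ℕ} {A : Matrix (Fin n) (Fin n) ℝ} (hA : A.PosSemidef) :
    (Matrix.fromBlocks A A A A).PosSemidef := by
  have h := (fromBlocks_zero_posSemidef hA).mul_mul_conjTranspose_same
    (Matrix.fromBlocks 1 0 1 0 : Matrix (Fin n ⊕ Fin n) (Fin n ⊕ Fin n) ℝ)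
  have he : (Matrix.fromBlocks 1 0 1 0 : Matrix (Fin n ⊕ Fin n) (Fin n ⊕ Fin n) ℝ) *
      Matrix.fromBlocks A 0 0 0 * (Matrix.fromBlocks 1 0 1 0)ᴴ = Matrix.fromBlocks A A A A := by
    simp [Matrix.fromBlocks_multiply, Matrix.fromBlocks_conjTranspose,
      Matrix.fromBlocks_transpose]
  rwa [he] at h

/-- If `X` is positive definite, `Z` positive semidefinite and `X − Z` positive semidefinite,
then `Z − Z X⁻¹ Z` is positive semidefinite. -/
theorem sub_mul_inv_mul_posSemidef (n : ℕ) (X Z : Matrix (Fin n) (Fin n) ℝ)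
    (hXs : X.IsHermitian) (hZs : Z.IsHermitian)
    (hX : X.PosDef) (hZ : Z.PosSemidef) (hXZ : (X - Z).PosSemidef) :
    (Z - Z * X⁻¹ * Z).PosSemidef := by
  haveI := hX.isUnit.invertible
  have key : (Matrix.fromBlocks X Z Zᴴ Z).PosSemidef := by
    have : Matrix.fromBlocks X Z Zᴴ Z =
        Matrix.fromBlocks Z Z Z Z + Matrix.fromBlocks (X - Z) 0 0 0 := by
      rw [hZs.eq]
      simp [Matrix.fromBlocks_add]
    rw [this]
    exact (fromBlocks_rep_posSemidef hZ).add (fromBlocks_zero_posSemidef hXZ)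
  rw [Matrix.PosDef.fromBlocks₁₁ Z Z hX] at key
  rwa [hZs.eq] at key
end

section
/- Let n be a positive integer and let P1d, P1i, P2d, P2i be n×n real symmetric positive semidefinite matrices. For w ∈ (0,1) define P₁(w) = (1/w)·P1d + P1i, P₂(w) = (1/(1−w))·P2d + P2i, and P(w) = (P₁(w)⁻¹ + P₂(w)⁻¹)⁻¹. Assume P₁(w) and P₂(w) are positive definite for every w ∈ (0,1). Then for every w ∈ (0,1), setting D₁ = P1d/w, D₂ = P2d/(1−w), B₃ = P₁(w)⁻¹ + P₂(w)⁻¹, and C = P₁(w)⁻¹·(D₁/w)·P₁(w)⁻¹ − P₂(w)⁻¹·(D₂/(1−w))·P₂(w)⁻¹, the second derivative of w ↦ log det(P(w)) at w is bounded below by tr(B₃⁻¹·C·B₃⁻¹·C), which is nonnegative. -/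
open Matrix Finset Set

section
open scoped MatrixOrder
theorem SplitCIF.exists_herm_sqrt {n : ℕ} {A : Matrix (Fin n) (Fin n) ℝ} (hA : A.PosSemidef) :
    ∃ p : Matrix (Fin n) (Fin n) ℝ, p.IsHermitian ∧ p * p = A :=
  ⟨CFC.sqrt A, (CFC.sqrt_nonneg A).posSemidef.isHermitian, CFC.sqrt_mul_sqrt_self A hA.nonneg⟩
end

namespace SplitCIF

attribute [local instance] Matrix.linftyOpNormedAddCommGroup Matrix.linftyOpNormedSpace
  Matrix.linftyOpNormedRing Matrix.linftyOpNormedAlgebra Matrix.linftyOpIsBoundedSMul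

variable {n : ℕ}

theorem hasDerivAt_entry {A : ℝ → Matrix (Fin n) (Fin n) ℝ} {A' : Matrix (Fin n) (Fin n) ℝ}
    {x : ℝ} (h : HasDerivAt A A' x) (i j : Fin n) :
    HasDerivAt (fun t => A t i j) (A' i j) x := by
  let l : Matrix (Fin n) (Fin n) ℝ →ₗ[ℝ] ℝ :=
    { toFun := fun M => M i j, map_add' := fun _ _ => rfl, map_smul' := fun _ _ => rfl }
  have hl := (LinearMap.toContinuousLinearMap l).hasFDerivAt.comp_hasDerivAt x h
  exact hl

theorem sum_det_updateColumn_eq_trace (B H : Matrix (Fin n) (Fin n) ℝ) :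
    ∑ i, (B.updateCol i fun k => H k i).det = Matrix.trace (B.adjugate * H) := by
  have : ∀ i, (B.updateCol i fun k => H k i).det = (B.adjugate *ᵥ fun k => H k i) i := by
    intro i
    rw [← Matrix.cramer_eq_adjugate_mulVec]
    simp [Matrix.cramer_apply]
  simp only [this, Matrix.trace, Matrix.diag, Matrix.mul_apply, Matrix.mulVec, dotProduct]

theorem hasDerivAt_det {A : ℝ → Matrix (Fin n) (Fin n) ℝ} {A' : Matrix (Fin n) (Fin n) ℝ}
    {x : ℝ} (h : HasDerivAt A A' x) :
    HasDerivAt (fun t => (A t).det) (Matrix.trace ((A x).adjugate * A')) x := by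
  have key : ∀ t, (A t).det = ∑ σ : Equiv.Perm (Fin n),
      (Equiv.Perm.sign σ : ℝ) * ∏ i, A t (σ i) i := fun t => Matrix.det_apply' (A t)
  simp only [key]
  have hd : HasDerivAt (fun t => ∑ σ : Equiv.Perm (Fin n),
      (Equiv.Perm.sign σ : ℝ) * ∏ i, A t (σ i) i)
      (∑ σ : Equiv.Perm (Fin n), (Equiv.Perm.sign σ : ℝ) *
        ∑ i, (∏ j ∈ univ.erase i, A x (σ j) j) • A' (σ i) i) x := by
    apply HasDerivAt.fun_sum
    intro σ _
    exact (HasDerivAt.fun_finset_prod fun i _ => hasDerivAt_entry h (σ i) i).const_mul _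
  convert hd using 1
  rw [← sum_det_updateColumn_eq_trace]
  simp only [smul_eq_mul, Finset.mul_sum]
  rw [Finset.sum_comm]
  refine Finset.sum_congr rfl fun i _ => ?_
  rw [Matrix.det_apply']
  refine Finset.sum_congr rfl fun σ _ => ?_
  rw [← Finset.prod_erase_mul (univ) _ (Finset.mem_univ i)]
  congr 1
  congr 1
  · exact Finset.prod_congr rfl fun j hj =>
      by rw [Matrix.updateCol_apply, if_neg (Finset.mem_erase.mp hj).1]
  · rw [Matrix.updateCol_apply, if_pos rfl]

theorem hasDerivAt_matrix_inv {A : ℝ → Matrix (Fin n) (Fin n) ℝ} {A' : Matrix (Fin n) (Fin n) ℝ}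
    {x : ℝ} (h : HasDerivAt A A' x) (hu : IsUnit (A x)) :
    HasDerivAt (fun t => (A t)⁻¹) (-((A x)⁻¹ * A' * (A x)⁻¹)) x := by
  obtain ⟨u, hu⟩ := hu
  have h1 : HasFDerivAt Ring.inverse
      (-(ContinuousLinearMap.mulLeftRight ℝ (Matrix (Fin n) (Fin n) ℝ) ↑u⁻¹) ↑u⁻¹) (A x) := by
    rw [← hu]; exact hasFDerivAt_ringInverse u
  have h2 := h1.comp_hasDerivAt x h
  have h3 : (↑u⁻¹ : Matrix (Fin n) (Fin n) ℝ) = (A x)⁻¹ := by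
    rw [Matrix.coe_units_inv, hu]
  simp only [Function.comp, ContinuousLinearMap.neg_apply,
    ContinuousLinearMap.mulLeftRight_apply, h3] at h2
  have heq : (fun t => (A t)⁻¹) = fun t => Ring.inverse (A t) :=
    funext fun t => Matrix.nonsing_inv_eq_ringInverse _
  rw [heq]
  exact h2

theorem hasDerivAt_trace {A : ℝ → Matrix (Fin n) (Fin n) ℝ} {A' : Matrix (Fin n) (Fin n) ℝ}
    {x : ℝ} (h : HasDerivAt A A' x) :
    HasDerivAt (fun t => (A t).trace) A'.trace x := by
  let l : Matrix (Fin n) (Fin n) ℝ →ₗ[ℝ] ℝ :=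
    { toFun := Matrix.trace, map_add' := Matrix.trace_add, map_smul' := Matrix.trace_smul }
  have hl := (LinearMap.toContinuousLinearMap l).hasFDerivAt.comp_hasDerivAt x h
  exact hl

theorem hasDerivAt_log_det {A : ℝ → Matrix (Fin n) (Fin n) ℝ} {A' : Matrix (Fin n) (Fin n) ℝ}
    {x : ℝ} (h : HasDerivAt A A' x) (hpd : (A x).PosDef) :
    HasDerivAt (fun t => Real.log (A t).det) (Matrix.trace ((A x)⁻¹ * A')) x := by
  have hdet : (A x).det ≠ 0 := ne_of_gt hpd.det_pos
  have h1 := (hasDerivAt_det h).log hdet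
  have h2 : Matrix.trace ((A x).adjugate * A') / (A x).det = Matrix.trace ((A x)⁻¹ * A') := by
    rw [Matrix.inv_def, Ring.inverse_eq_inv, Matrix.smul_mul, Matrix.trace_smul, smul_eq_mul,
      div_eq_inv_mul]
  rwa [h2] at h1

theorem trace_nonneg_of_posSemidef {A : Matrix (Fin n) (Fin n) ℝ} (hA : A.PosSemidef) :
    0 ≤ A.trace := by
  have h : ∀ i, 0 ≤ A i i := by
    intro i
    have := hA.dotProduct_mulVec_nonneg (Pi.single i 1)
    simpa [dotProduct, Matrix.mulVec, Pi.single_apply, Finset.sum_ite_eq,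
      Finset.sum_ite_eq'] using this
  exact Finset.sum_nonneg fun i _ => h i

theorem trace_mul_nonneg {A B : Matrix (Fin n) (Fin n) ℝ} (hA : A.PosSemidef)
    (hB : B.PosSemidef) : 0 ≤ (A * B).trace := by
  classical
  obtain ⟨s, hsh, hss⟩ := exists_herm_sqrt hA
  have hmul : A * B = s * (s * B) := by
    rw [← mul_assoc, hss]
  rw [hmul, Matrix.trace_mul_comm]
  have heq : s * B * s = sᴴ * B * s := by rw [hsh.eq]
  have hpsd : (s * B * s).PosSemidef := by
    rw [heq]; exact hB.conjTranspose_mul_mul_same _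
  exact trace_nonneg_of_posSemidef hpsd

theorem posSemidef_smul {A : Matrix (Fin n) (Fin n) ℝ} (hA : A.PosSemidef) {c : ℝ}
    (hc : 0 ≤ c) : (c • A).PosSemidef := by
  constructor
  · unfold Matrix.IsHermitian at *
    rw [Matrix.conjTranspose_smul, hA.1]
    simp
  · exact (hA.smul hc).2

/-- If `0 ≼ R ≼ P` with `P` positive definite, then `R P⁻¹ R ≼ R`. -/
theorem key_loewner {R P : Matrix (Fin n) (Fin n) ℝ} (hR : R.PosSemidef) (hP : P.PosDef)
    (hPR : (P - R).PosSemidef) : (R - R * P⁻¹ * R).PosSemidef := by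
  classical
  obtain ⟨p, hph, hpp⟩ : ∃ p : Matrix (Fin n) (Fin n) ℝ, p.IsHermitian ∧ p * p = P :=
    exists_herm_sqrt hP.posSemidef
  have hdet : IsUnit p.det := by
    have h2 : p.det * p.det = P.det := by rw [← Matrix.det_mul, hpp]
    have := hP.det_pos
    refine isUnit_iff_ne_zero.mpr fun h0 => ?_
    rw [h0, mul_zero] at h2; linarith
  have hpinv : p * p⁻¹ = 1 := Matrix.mul_nonsing_inv p hdet
  have hinvp : p⁻¹ * p = 1 := Matrix.nonsing_inv_mul p hdet
  have hPinv : P⁻¹ = p⁻¹ * p⁻¹ := by rw [← hpp, Matrix.mul_inv_rev]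
  have hpinvh : p⁻¹.IsHermitian := hph.inv
  have hQpsd : (p⁻¹ * R * p⁻¹).PosSemidef := by
    have := hR.conjTranspose_mul_mul_same (B := p⁻¹)
    rwa [hpinvh.eq] at this
  obtain ⟨Q, hQ, hQpsd'⟩ : ∃ Q : Matrix (Fin n) (Fin n) ℝ, Q = p⁻¹ * R * p⁻¹ ∧ Q.PosSemidef :=
    ⟨_, rfl, hQpsd⟩
  have honeQ : (1 - Q).PosSemidef := by
    have h1 : (p⁻¹ᴴ * (P - R) * p⁻¹).PosSemidef := hPR.conjTranspose_mul_mul_same _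
    have h2 : p⁻¹ᴴ * (P - R) * p⁻¹ = 1 - Q := by
      rw [hpinvh.eq, Matrix.mul_sub, Matrix.sub_mul, hQ, ← hpp]
      congr 1
      calc p⁻¹ * (p * p) * p⁻¹ = (p⁻¹ * p) * (p * p⁻¹) := by noncomm_ring
        _ = 1 := by rw [hpinv, hinvp, one_mul]
    rwa [h2] at h1
  obtain ⟨q, hqh, hqq⟩ : ∃ q : Matrix (Fin n) (Fin n) ℝ, q.IsHermitian ∧ q * q = Q :=
    exists_herm_sqrt hQpsd'
  have hQQ : (Q - Q * Q).PosSemidef := by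
    have h1 : (qᴴ * (1 - Q) * q).PosSemidef := honeQ.conjTranspose_mul_mul_same _
    have h2 : qᴴ * (1 - Q) * q = Q - Q * Q := by
      rw [hqh.eq, Matrix.mul_sub, Matrix.sub_mul, mul_one, hqq, ← hqq]
      noncomm_ring
    rwa [h2] at h1
  have hfinal : R - R * P⁻¹ * R = pᴴ * (Q - Q * Q) * p := by
    rw [hph.eq, Matrix.mul_sub, Matrix.sub_mul, hQ, hPinv]
    congr 1
    · calc R = (p * p⁻¹) * R * (p⁻¹ * p) := by rw [hpinv, hinvp, Matrix.one_mul, Matrix.mul_one]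
        _ = p * (p⁻¹ * R * p⁻¹) * p := by noncomm_ring
    · calc R * (p⁻¹ * p⁻¹) * R
          = (p * p⁻¹) * (R * (p⁻¹ * p⁻¹) * R) * (p⁻¹ * p) := by
            rw [hpinv, hinvp, Matrix.one_mul, Matrix.mul_one]
        _ = p * (p⁻¹ * R * p⁻¹ * (p⁻¹ * R * p⁻¹)) * p := by noncomm_ring
  rw [hfinal]
  exact hQQ.conjTranspose_mul_mul_same _


theorem isHermitian_conj_mul {a d : Matrix (Fin n) (Fin n) ℝ} (ha : a.IsHermitian)
    (hd : d.IsHermitian) : (a * d * a).IsHermitian := by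
  show (a * d * a)ᴴ = a * d * a
  rw [Matrix.conjTranspose_mul, Matrix.conjTranspose_mul, ha.eq, hd.eq, ← mul_assoc]

end SplitCIF

open SplitCIF

attribute [local instance] Matrix.linftyOpNormedAddCommGroup Matrix.linftyOpNormedSpace
  Matrix.linftyOpNormedRing Matrix.linftyOpNormedAlgebra Matrix.linftyOpIsBoundedSMul

/-- For the split CIF, at each `w ∈ (0,1)`, with `D₁ = P1d/w`, `D₂ = P2d/(1−w)`,
`B₃ = P₁(w)⁻¹ + P₂(w)⁻¹` and
`C = P₁(w)⁻¹ (D₁/w) P₁(w)⁻¹ − P₂(w)⁻¹ (D₂/(1−w)) P₂(w)⁻¹`, the second derivative of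
`x ↦ log det P(x)` at `w` is bounded below by `tr(B₃⁻¹ C B₃⁻¹ C)`, which is nonnegative. -/
theorem split_cif_second_deriv_lower_bound (n : ℕ) (hn : 0 < n)
    (P1d P1i P2d P2i : Matrix (Fin n) (Fin n) ℝ)
    (hP1d : P1d.PosSemidef) (hP1i : P1i.PosSemidef)
    (hP2d : P2d.PosSemidef) (hP2i : P2i.PosSemidef)
    (hpos : ∀ w ∈ Set.Ioo (0 : ℝ) 1,
      ((1 / w) • P1d + P1i).PosDef ∧ ((1 / (1 - w)) • P2d + P2i).PosDef)
    (w : ℝ) (hw : w ∈ Set.Ioo (0 : ℝ) 1)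
    (D₁ D₂ B₃ C : Matrix (Fin n) (Fin n) ℝ)
    (hD₁ : D₁ = (1 / w) • P1d) (hD₂ : D₂ = (1 / (1 - w)) • P2d)
    (hB₃ : B₃ = ((1 / w) • P1d + P1i)⁻¹ + ((1 / (1 - w)) • P2d + P2i)⁻¹)
    (hC : C = ((1 / w) • P1d + P1i)⁻¹ * ((1 / w) • D₁) * ((1 / w) • P1d + P1i)⁻¹
            - ((1 / (1 - w)) • P2d + P2i)⁻¹ * ((1 / (1 - w)) • D₂)
              * ((1 / (1 - w)) • P2d + P2i)⁻¹) :
    Matrix.trace (B₃⁻¹ * C * B₃⁻¹ * C) ≤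
      deriv (deriv (fun x =>
        Real.log ((((1 / x) • P1d + P1i)⁻¹ + ((1 / (1 - x)) • P2d + P2i)⁻¹)⁻¹).det)) w ∧
    0 ≤ Matrix.trace (B₃⁻¹ * C * B₃⁻¹ * C) := by
  obtain ⟨hw0, hw1⟩ := hw
  have hwmem : w ∈ Set.Ioo (0:ℝ) 1 := ⟨hw0, hw1⟩
  have h1w : (0:ℝ) < 1 - w := by linarith
  have hwne : w ≠ 0 := ne_of_gt hw0
  have h1wne : (1:ℝ) - w ≠ 0 := ne_of_gt h1w
  have hIoo : Set.Ioo (0:ℝ) 1 ∈ nhds w := isOpen_Ioo.mem_nhds hwmem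
  -- derivative of the two blocks, everywhere on (0,1)
  have hQ1' : ∀ t ∈ Set.Ioo (0:ℝ) 1,
      HasDerivAt (fun y : ℝ => (1/y) • P1d + P1i) (-(t^2)⁻¹ • P1d) t := by
    intro t ht
    simp only [one_div]
    exact ((hasDerivAt_inv (ne_of_gt ht.1)).smul_const P1d).add_const P1i
  have hQ2' : ∀ t ∈ Set.Ioo (0:ℝ) 1,
      HasDerivAt (fun y : ℝ => (1/(1-y)) • P2d + P2i) (((1-t)^2)⁻¹ • P2d) t := by
    intro t ht
    have hne : (1:ℝ) - t ≠ 0 := by have := ht.2; intro h; linarith [sub_eq_zero.mp h]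
    have hi : HasDerivAt (fun y : ℝ => 1 - y) (-1) t := (hasDerivAt_id t).const_sub 1
    have hinv := hi.inv hne
    have hval : -(-1:ℝ) / (1-t)^2 = ((1-t)^2)⁻¹ := by rw [neg_neg, one_div]
    rw [hval] at hinv
    simp only [one_div]
    exact (hinv.smul_const P2d).add_const P2i
  have hQ1inv : ∀ t ∈ Set.Ioo (0:ℝ) 1,
      HasDerivAt (fun y : ℝ => ((1/y) • P1d + P1i)⁻¹)
        ((t^2)⁻¹ • (((1/t) • P1d + P1i)⁻¹ * P1d * ((1/t) • P1d + P1i)⁻¹)) t := by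
    intro t ht
    have h := hasDerivAt_matrix_inv (hQ1' t ht) (hpos t ht).1.isUnit
    convert h using 1
    rw [mul_smul_comm, smul_mul_assoc, neg_smul, neg_neg]
  have hQ2inv : ∀ t ∈ Set.Ioo (0:ℝ) 1,
      HasDerivAt (fun y : ℝ => ((1/(1-y)) • P2d + P2i)⁻¹)
        (-(((1-t)^2)⁻¹ • (((1/(1-t)) • P2d + P2i)⁻¹ * P2d * ((1/(1-t)) • P2d + P2i)⁻¹))) t := by
    intro t ht
    have h := hasDerivAt_matrix_inv (hQ2' t ht) (hpos t ht).2.isUnit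
    convert h using 1
    rw [mul_smul_comm, smul_mul_assoc]
  have hBder : ∀ t ∈ Set.Ioo (0:ℝ) 1,
      HasDerivAt (fun y : ℝ => ((1/y) • P1d + P1i)⁻¹ + ((1/(1-y)) • P2d + P2i)⁻¹)
        ((t^2)⁻¹ • (((1/t) • P1d + P1i)⁻¹ * P1d * ((1/t) • P1d + P1i)⁻¹)
          - ((1-t)^2)⁻¹ • (((1/(1-t)) • P2d + P2i)⁻¹ * P2d * ((1/(1-t)) • P2d + P2i)⁻¹)) t := by
    intro t ht
    have h := (hQ1inv t ht).add (hQ2inv t ht)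
    rwa [← sub_eq_add_neg] at h
  have hBpd : ∀ t ∈ Set.Ioo (0:ℝ) 1,
      (((1/t) • P1d + P1i)⁻¹ + ((1/(1-t)) • P2d + P2i)⁻¹).PosDef :=
    fun t ht => ((hpos t ht).1.inv).add ((hpos t ht).2.inv)
  -- the log-det function without the outer inverse, and its derivative function
  set g : ℝ → ℝ := fun t =>
    Real.log ((((1/t) • P1d + P1i)⁻¹ + ((1/(1-t)) • P2d + P2i)⁻¹)).det with hg
  set G : ℝ → ℝ := fun t => Matrix.trace
    ((((1/t) • P1d + P1i)⁻¹ + ((1/(1-t)) • P2d + P2i)⁻¹)⁻¹ *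
      ((t^2)⁻¹ • (((1/t) • P1d + P1i)⁻¹ * P1d * ((1/t) • P1d + P1i)⁻¹)
        - ((1-t)^2)⁻¹ • (((1/(1-t)) • P2d + P2i)⁻¹ * P2d * ((1/(1-t)) • P2d + P2i)⁻¹))) with hG
  have hgder : ∀ t ∈ Set.Ioo (0:ℝ) 1, HasDerivAt g (G t) t := fun t ht =>
    hasDerivAt_log_det (hBder t ht) (hBpd t ht)
  -- relate the target function to -g
  have hfg : (fun x => Real.log
        ((((1 / x) • P1d + P1i)⁻¹ + ((1 / (1 - x)) • P2d + P2i)⁻¹)⁻¹).det)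
      =ᶠ[nhds w] fun t => -(g t) := by
    filter_upwards [hIoo] with t ht
    show Real.log ((((1/t) • P1d + P1i)⁻¹ + ((1/(1-t)) • P2d + P2i)⁻¹)⁻¹).det
        = -(Real.log ((((1/t) • P1d + P1i)⁻¹ + ((1/(1-t)) • P2d + P2i)⁻¹)).det)
    rw [Matrix.det_nonsing_inv, Ring.inverse_eq_inv, Real.log_inv]
  have h2 : deriv (fun x => Real.log
        ((((1 / x) • P1d + P1i)⁻¹ + ((1 / (1 - x)) • P2d + P2i)⁻¹)⁻¹).det)
      =ᶠ[nhds w] fun t => -(G t) := by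
    have h1 := hfg.deriv
    filter_upwards [hIoo, h1] with t ht h1t
    rw [h1t]; exact (hgder t ht).neg.deriv
  have hstep1 : deriv (deriv (fun x => Real.log
        ((((1 / x) • P1d + P1i)⁻¹ + ((1 / (1 - x)) • P2d + P2i)⁻¹)⁻¹).det)) w
      = -(deriv G w) := by
    rw [h2.deriv_eq]; exact deriv.neg (f := G)
  -- now compute deriv G w
  have hpd1 : ((1/w) • P1d + P1i).PosDef := (hpos w hwmem).1
  have hpd2 : ((1/(1-w)) • P2d + P2i).PosDef := (hpos w hwmem).2
  have hQ1w := hQ1inv w hwmem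
  have hQ2w := hQ2inv w hwmem
  have hBw := hBder w hwmem
  have hBpdw := hBpd w hwmem
  have hc1 : HasDerivAt (fun y : ℝ => (y^2)⁻¹) (-(2*w) / (w^2)^2) w := by
    have h := (hasDerivAt_pow 2 w).inv (pow_ne_zero 2 hwne)
    refine h.congr_deriv ?_
    norm_num
  have hc2 : HasDerivAt (fun y : ℝ => ((1-y)^2)⁻¹) ((2*(1-w)) / ((1-w)^2)^2) w := by
    have hi : HasDerivAt (fun y : ℝ => 1 - y) (-1) w := (hasDerivAt_id w).const_sub 1
    have h := (hi.pow 2).inv (pow_ne_zero 2 h1wne)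
    refine h.congr_deriv ?_
    norm_num
  set A1i := ((1 / w) • P1d + P1i)⁻¹ with hA1i
  set A2i := ((1 / (1 - w)) • P2d + P2i)⁻¹ with hA2i
  have hX1der : HasDerivAt
      (fun y : ℝ => ((1/y) • P1d + P1i)⁻¹ * P1d * ((1/y) • P1d + P1i)⁻¹)
      (((w^2)⁻¹ • (A1i * P1d * A1i)) * P1d * A1i
        + A1i * P1d * ((w^2)⁻¹ • (A1i * P1d * A1i))) w :=
    (hQ1w.mul_const P1d).mul hQ1w
  have hX2der : HasDerivAt
      (fun y : ℝ => ((1/(1-y)) • P2d + P2i)⁻¹ * P2d * ((1/(1-y)) • P2d + P2i)⁻¹)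
      ((-(((1-w)^2)⁻¹ • (A2i * P2d * A2i))) * P2d * A2i
        + A2i * P2d * (-(((1-w)^2)⁻¹ • (A2i * P2d * A2i)))) w :=
    (hQ2w.mul_const P2d).mul hQ2w
  have hT1der : HasDerivAt
      (fun y : ℝ => (y^2)⁻¹ • (((1/y) • P1d + P1i)⁻¹ * P1d * ((1/y) • P1d + P1i)⁻¹))
      ((w^2)⁻¹ • (((w^2)⁻¹ • (A1i * P1d * A1i)) * P1d * A1i
          + A1i * P1d * ((w^2)⁻¹ • (A1i * P1d * A1i)))
        + (-(2*w) / (w^2)^2) • (A1i * P1d * A1i)) w := hc1.smul hX1der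
  have hT2der : HasDerivAt
      (fun y : ℝ => ((1-y)^2)⁻¹ • (((1/(1-y)) • P2d + P2i)⁻¹ * P2d * ((1/(1-y)) • P2d + P2i)⁻¹))
      (((1-w)^2)⁻¹ • ((-(((1-w)^2)⁻¹ • (A2i * P2d * A2i))) * P2d * A2i
          + A2i * P2d * (-(((1-w)^2)⁻¹ • (A2i * P2d * A2i))))
        + ((2*(1-w)) / ((1-w)^2)^2) • (A2i * P2d * A2i)) w := hc2.smul hX2der
  set W1 := w • P1d - P1d * A1i * P1d with hW1
  set W2 := (1-w) • P2d - P2d * A2i * P2d with hW2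
  set S1 := (2 * ((w^2)⁻¹ * (w^2)⁻¹)) • (A1i * W1 * A1i) with hS1
  set S2 := (2 * (((1-w)^2)⁻¹ * ((1-w)^2)⁻¹)) • (A2i * W2 * A2i) with hS2
  have hT1eq : (w^2)⁻¹ • (((w^2)⁻¹ • (A1i * P1d * A1i)) * P1d * A1i
          + A1i * P1d * ((w^2)⁻¹ • (A1i * P1d * A1i)))
        + (-(2*w) / (w^2)^2) • (A1i * P1d * A1i) = -S1 := by
    rw [hS1, hW1]
    simp only [smul_mul_assoc, mul_smul_comm, Matrix.mul_sub, Matrix.sub_mul, smul_sub,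
      smul_smul, mul_assoc]
    module
  have hT2eq : ((1-w)^2)⁻¹ • ((-(((1-w)^2)⁻¹ • (A2i * P2d * A2i))) * P2d * A2i
          + A2i * P2d * (-(((1-w)^2)⁻¹ • (A2i * P2d * A2i))))
        + ((2*(1-w)) / ((1-w)^2)^2) • (A2i * P2d * A2i) = S2 := by
    rw [hS2, hW2]
    obtain ⟨b, hb⟩ : ∃ b : ℝ, b = 1 - w := ⟨_, rfl⟩
    rw [← hb]
    simp only [smul_mul_assoc, mul_smul_comm, Matrix.mul_sub, Matrix.sub_mul, smul_sub,
      smul_smul, mul_assoc, Matrix.neg_mul, Matrix.mul_neg, neg_smul, smul_neg]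
    module
  rw [hT1eq] at hT1der
  rw [hT2eq] at hT2der
  have hCder := hT1der.sub hT2der
  set Cm := (w^2)⁻¹ • (A1i * P1d * A1i) - ((1-w)^2)⁻¹ • (A2i * P2d * A2i) with hCm
  set Bi := (A1i + A2i)⁻¹ with hBi
  have hBinv : HasDerivAt
      (fun y : ℝ => (((1/y) • P1d + P1i)⁻¹ + ((1/(1-y)) • P2d + P2i)⁻¹)⁻¹)
      (-(Bi * Cm * Bi)) w := hasDerivAt_matrix_inv hBw hBpdw.isUnit
  have hprod : HasDerivAt
      (fun y : ℝ => (((1/y) • P1d + P1i)⁻¹ + ((1/(1-y)) • P2d + P2i)⁻¹)⁻¹ *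
        ((y^2)⁻¹ • (((1/y) • P1d + P1i)⁻¹ * P1d * ((1/y) • P1d + P1i)⁻¹)
          - ((1-y)^2)⁻¹ • (((1/(1-y)) • P2d + P2i)⁻¹ * P2d * ((1/(1-y)) • P2d + P2i)⁻¹)))
      (-(Bi * Cm * Bi) * Cm + Bi * (-S1 - S2)) w := hBinv.mul hCder
  have hGder : HasDerivAt G
      (Matrix.trace (-(Bi * Cm * Bi) * Cm + Bi * (-S1 - S2))) w := hasDerivAt_trace hprod
  -- final value of second derivative
  have hfinal : deriv (deriv (fun x => Real.log
        ((((1 / x) • P1d + P1i)⁻¹ + ((1 / (1 - x)) • P2d + P2i)⁻¹)⁻¹).det)) w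
      = Matrix.trace (Bi * Cm * Bi * Cm) + Matrix.trace (Bi * (S1 + S2)) := by
    rw [hstep1, hGder.deriv]
    have e0 : -(Bi * Cm * Bi) * Cm = -(Bi * Cm * Bi * Cm) := by noncomm_ring
    have e1 : Bi * (-S1 - S2) = -(Bi * (S1 + S2)) := by noncomm_ring
    rw [e0, e1, Matrix.trace_add, Matrix.trace_neg, Matrix.trace_neg]
    ring
  -- identifications
  have hCCm : C = Cm := by
    rw [hC, hD₁, hD₂, hCm]
    simp only [smul_smul, mul_smul_comm, smul_mul_assoc, mul_assoc]
    match_scalars <;> field_simp <;> ring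
  have hB₃Bi : B₃⁻¹ = Bi := by rw [hB₃, hBi]
  -- positivity facts
  have hBipd : Bi.PosDef := by rw [hBi]; exact hBpdw.inv
  have hBipsd : Bi.PosSemidef := hBipd.posSemidef
  have hA1iherm : A1i.IsHermitian := by rw [hA1i]; exact hpd1.isHermitian.inv
  have hA2iherm : A2i.IsHermitian := by rw [hA2i]; exact hpd2.isHermitian.inv
  have hW1psd : W1.PosSemidef := by
    have hkey := key_loewner (posSemidef_smul hP1d (le_of_lt (by positivity : (0:ℝ) < 1/w)))
      hpd1 (by rw [add_sub_cancel_left]; exact hP1i)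
    have hsc := posSemidef_smul hkey (sq_nonneg w)
    have heq : (w^2 : ℝ) • ((1/w) • P1d
        - ((1/w) • P1d) * ((1/w) • P1d + P1i)⁻¹ * ((1/w) • P1d)) = W1 := by
      rw [hW1, hA1i]
      simp only [smul_mul_assoc, mul_smul_comm, smul_smul, smul_sub, mul_assoc]
      match_scalars <;> field_simp <;> ring
    rwa [heq] at hsc
  have hW2psd : W2.PosSemidef := by
    have hkey := key_loewner (posSemidef_smul hP2d (le_of_lt (by positivity : (0:ℝ) < 1/(1-w))))
      hpd2 (by rw [add_sub_cancel_left]; exact hP2i)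
    have hsc := posSemidef_smul hkey (sq_nonneg (1-w))
    have heq : ((1-w)^2 : ℝ) • ((1/(1-w)) • P2d
        - ((1/(1-w)) • P2d) * ((1/(1-w)) • P2d + P2i)⁻¹ * ((1/(1-w)) • P2d)) = W2 := by
      rw [hW2, hA2i]
      simp only [smul_mul_assoc, mul_smul_comm, smul_smul, smul_sub, mul_assoc]
      match_scalars <;> field_simp <;> ring
    rwa [heq] at hsc
  have hS1psd : S1.PosSemidef := by
    rw [hS1]
    refine posSemidef_smul ?_ (by positivity)
    have h := hW1psd.conjTranspose_mul_mul_same (B := A1i)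
    rwa [hA1iherm.eq] at h
  have hS2psd : S2.PosSemidef := by
    rw [hS2]
    refine posSemidef_smul ?_ (by positivity)
    have h := hW2psd.conjTranspose_mul_mul_same (B := A2i)
    rwa [hA2iherm.eq] at h
  have hCmherm : Cm.IsHermitian := by
    rw [hCm]
    refine IsHermitian.sub ?_ ?_
    · have h := isHermitian_conj_mul hA1iherm hP1d.isHermitian
      have : ((w^2)⁻¹ • (A1i * P1d * A1i))ᴴ = (w^2)⁻¹ • (A1i * P1d * A1i) := by
        rw [Matrix.conjTranspose_smul, h.eq]
        simp
      exact this
    · have h := isHermitian_conj_mul hA2iherm hP2d.isHermitian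
      have : (((1-w)^2)⁻¹ • (A2i * P2d * A2i))ᴴ = ((1-w)^2)⁻¹ • (A2i * P2d * A2i) := by
        rw [Matrix.conjTranspose_smul, h.eq]
        simp
      exact this
  have htr2 : 0 ≤ Matrix.trace (Bi * Cm * Bi * Cm) := by
    have hCBC : (Cm * Bi * Cm).PosSemidef := by
      have h := hBipsd.conjTranspose_mul_mul_same (B := Cm)
      rwa [hCmherm.eq] at h
    have hassoc : Bi * Cm * Bi * Cm = Bi * (Cm * Bi * Cm) := by noncomm_ring
    rw [hassoc]
    exact trace_mul_nonneg hBipsd hCBC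
  have htrS : 0 ≤ Matrix.trace (Bi * (S1 + S2)) :=
    trace_mul_nonneg hBipsd (hS1psd.add hS2psd)
  constructor
  · rw [hfinal, hCCm, hB₃Bi]
    linarith
  · rw [hCCm, hB₃Bi]
    exact htr2
end

section
/- Let n be a positive integer and let P1d, P1i, P2d, P2i be n×n real symmetric positive semidefinite matrices. For w ∈ (0,1) define P₁(w) = (1/w)·P1d + P1i and P₂(w) = (1/(1−w))·P2d + P2i, and assume P₁(w) and P₂(w) are positive definite for every w ∈ (0,1). Fix w ∈ (0,1) and set D₁ = P1d/w, D₂ = P2d/(1−w), P₃ = P₁(w) + P₂(w). Then the second derivative at w of the function w ↦ log det P₁(w) + log det P₂(w) − log det(P₁(w)+P₂(w)) equals T₁/w² + T₂/(1−w)² − 2·T₃/(w·(1−w)), where T₁ = tr(2P₁⁻¹D₁ − 2P₃⁻¹D₁ − P₁⁻¹D₁P₁⁻¹D₁ + P₃⁻¹D₁P₃⁻¹D₁), T₂ = tr(2P₂⁻¹D₂ − 2P₃⁻¹D₂ − P₂⁻¹D₂P₂⁻¹D₂ + P₃⁻¹D₂P₃⁻¹D₂), and T₃ = tr(P₃⁻¹D₁P₃⁻¹D₂)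 (with P₁ = P₁(w), P₂ = P₂(w)). -/
set_option maxHeartbeats 1000000

open Matrix Set

section Machinery
variable {n : ℕ}

noncomputable def detCM (n : ℕ) : ContinuousMultilinearMap ℝ (fun _ : Fin n => (Fin n → ℝ)) ℝ :=
  MultilinearMap.mkContinuous
    ((Matrix.detRowAlternating : (Fin n → ℝ) [⋀^Fin n]→ₗ[ℝ] ℝ).toMultilinearMap)
    (Nat.factorial n) (by
      intro m
      have h1 : (Matrix.detRowAlternating : (Fin n → ℝ) [⋀^Fin n]→ₗ[ℝ] ℝ).toMultilinearMap m
          = (Matrix.of m).det := rfl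
      rw [h1, Matrix.det_apply]
      calc ‖∑ σ : Equiv.Perm (Fin n), Equiv.Perm.sign σ • ∏ i, Matrix.of m (σ i) i‖
          ≤ ∑ σ : Equiv.Perm (Fin n), ‖Equiv.Perm.sign σ • ∏ i, Matrix.of m (σ i) i‖ :=
            norm_sum_le _ _
        _ ≤ ∑ _σ : Equiv.Perm (Fin n), ∏ i, ‖m i‖ := by
            refine Finset.sum_le_sum fun σ _ => ?_
            have hsign : ‖(Equiv.Perm.sign σ : ℤˣ) • ∏ i, Matrix.of m (σ i) i‖
                = ‖∏ i, Matrix.of m (σ i) i‖ := by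
              rcases Int.units_eq_one_or (Equiv.Perm.sign σ) with h | h <;>
                simp [h, Units.smul_def, norm_neg]
            rw [hsign]
            have : ∀ i, Matrix.of m (σ i) i = m (σ i) i := fun _ => rfl
            rw [Real.norm_eq_abs, Finset.abs_prod]
            have h2 : ∀ i ∈ Finset.univ, |m (σ i) i| ≤ ‖m (σ i)‖ := by
              intro i _
              simpa using norm_le_pi_norm (m (σ i)) i
            calc ∏ i, |Matrix.of m (σ i) i| ≤ ∏ i, ‖m (σ i)‖ :=
                  Finset.prod_le_prod (fun i _ => abs_nonneg _) h2
              _ = ∏ i, ‖m i‖ := Equiv.prod_comp σ (fun i => ‖m i‖)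
        _ = (Nat.factorial n) * ∏ i, ‖m i‖ := by
            rw [Finset.sum_const]
            simp [Fintype.card_perm, mul_comm]
      )

theorem detCM_apply (m : ∀ _ : Fin n, Fin n → ℝ) : detCM n m = (Matrix.of m).det := rfl

theorem hasDerivAt_det_path (M : ℝ → Matrix (Fin n) (Fin n) ℝ) (M' : Matrix (Fin n) (Fin n) ℝ)
    (x : ℝ) (h : ∀ i j, HasDerivAt (fun t => M t i j) (M' i j) x) :
    HasDerivAt (fun t => (M t).det) (∑ i, ((M x).updateRow i (M' i)).det) x := by
  have hρ : HasDerivAt (fun t => (fun i => M t i)) (fun i => (M' i : Fin n → ℝ)) x := by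
    rw [hasDerivAt_pi]
    intro i
    rw [hasDerivAt_pi]
    exact fun j => h i j
  have hd := ((detCM n).hasFDerivAt (x := fun i => M x i)).comp_hasDerivAt x hρ
  have : (detCM n).linearDeriv (fun i => M x i) (fun i => M' i)
      = ∑ i, ((M x).updateRow i (M' i)).det := by
    rw [ContinuousMultilinearMap.linearDeriv_apply]
    rfl
  rw [this] at hd
  exact hd

theorem sum_det_updateRow (A B : Matrix (Fin n) (Fin n) ℝ) (hA : A.det ≠ 0) :
    ∑ i, (A.updateRow i (B i)).det = A.det * Matrix.trace (A⁻¹ * B) := by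
  have h1 : ∀ i, (A.updateRow i (B i)).det = ∑ j, B i j * adjugate A j i := by
    intro i
    rw [← cramer_transpose_apply]
    have hb : (B i) = ∑ j, B i j • (Pi.single j 1 : Fin n → ℝ) := by
      ext j
      simp [Pi.single_apply]
    conv_lhs => rw [hb, map_sum, Finset.sum_apply]
    refine Finset.sum_congr rfl fun j _ => ?_
    rw [LinearMap.map_smul]
    simp only [Pi.smul_apply, smul_eq_mul, adjugate_def, Matrix.of_apply]
  have h2 : ∑ i, (A.updateRow i (B i)).det = Matrix.trace (adjugate A * B) := by
    rw [Matrix.trace_mul_comm]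
    simp only [h1, Matrix.trace, Matrix.diag, Matrix.mul_apply]
  rw [h2]
  have h3 : adjugate A = A.det • A⁻¹ := by
    rw [Matrix.inv_def, Ring.inverse_eq_inv', smul_smul, mul_inv_cancel₀ hA, one_smul]
  rw [h3, Matrix.smul_mul, Matrix.trace_smul, smul_eq_mul]

theorem hasDerivAt_det_trace (M : ℝ → Matrix (Fin n) (Fin n) ℝ) (M' : Matrix (Fin n) (Fin n) ℝ)
    (x : ℝ) (h : ∀ i j, HasDerivAt (fun t => M t i j) (M' i j) x) (hdet : (M x).det ≠ 0) :
    HasDerivAt (fun t => (M t).det) ((M x).det * Matrix.trace ((M x)⁻¹ * M')) x := by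
  have := hasDerivAt_det_path M M' x h
  rwa [sum_det_updateRow _ _ hdet] at this

theorem hasDerivAt_log_det (M : ℝ → Matrix (Fin n) (Fin n) ℝ) (M' : Matrix (Fin n) (Fin n) ℝ)
    (x : ℝ) (h : ∀ i j, HasDerivAt (fun t => M t i j) (M' i j) x)
    (hdet : (M x).det ≠ 0) :
    HasDerivAt (fun t => Real.log (M t).det) (Matrix.trace ((M x)⁻¹ * M')) x := by
  have := (Real.hasDerivAt_log hdet).comp x (hasDerivAt_det_trace M M' x h hdet)
  refine this.congr_deriv ?_
  field_simp

theorem hasDerivAt_inv_entries (M : ℝ → Matrix (Fin n) (Fin n) ℝ) (M' : Matrix (Fin n) (Fin n) ℝ)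
    (x : ℝ) (h : ∀ i j, HasDerivAt (fun t => M t i j) (M' i j) x)
    (hU : ∀ᶠ t in nhds x, (M t).det ≠ 0) :
    ∀ i j, HasDerivAt (fun t => (M t)⁻¹ i j) ((-((M x)⁻¹ * M' * (M x)⁻¹)) i j) x := by
  classical
  have hdet : (M x).det ≠ 0 := hU.self_of_nhds
  -- determinant path derivative (value unneeded beyond existence)
  have hdetD : HasDerivAt (fun t => (M t).det) (∑ i, ((M x).updateRow i (M' i)).det) x :=
    hasDerivAt_det_path M M' x h
  -- adjugate entries differentiable
  have hadj : ∀ i j, DifferentiableAt ℝ (fun t => adjugate (M t) i j) x := by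
    intro i j
    have heq : (fun t => adjugate (M t) i j)
        = fun t => ((M t).updateRow j (Pi.single i 1)).det := by
      funext t; rw [adjugate_apply]
    rw [heq]
    refine (hasDerivAt_det_path (fun t => (M t).updateRow j (Pi.single i 1))
      (M'.updateRow j 0) x ?_).differentiableAt
    intro k l
    by_cases hk : k = j
    · subst hk
      simp only [Matrix.updateRow_self]
      exact hasDerivAt_const x _
    · simp only [Matrix.updateRow_ne hk]
      exact h k l
  -- inverse entries differentiable
  have hinv_eq : ∀ t, ∀ i j : Fin n, (M t)⁻¹ i j = ((M t).det)⁻¹ * adjugate (M t) i j := by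
    intro t i j
    rw [Matrix.inv_def, Ring.inverse_eq_inv', Matrix.smul_apply, smul_eq_mul]
  have hdiffinv : ∀ i j, DifferentiableAt ℝ (fun t => (M t)⁻¹ i j) x := by
    intro i j
    have : (fun t => (M t)⁻¹ i j) = fun t => ((M t).det)⁻¹ * adjugate (M t) i j := by
      funext t; exact hinv_eq t i j
    rw [this]
    exact (hdetD.differentiableAt.inv hdet).mul (hadj i j)
  set N' : Matrix (Fin n) (Fin n) ℝ :=
    Matrix.of (fun i j => deriv (fun t => (M t)⁻¹ i j) x) with hN'def
  have hN' : ∀ i j, HasDerivAt (fun t => (M t)⁻¹ i j) (N' i j) x := fun i j =>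
    (hdiffinv i j).hasDerivAt
  -- product rule on (M t)⁻¹ * M t = 1
  have key : N' * M x + (M x)⁻¹ * M' = 0 := by
    ext i j
    have hL : HasDerivAt (fun t => ∑ k, (M t)⁻¹ i k * M t k j)
        (∑ k, (N' i k * M x k j + (M x)⁻¹ i k * M' k j)) x :=
      HasDerivAt.fun_sum fun k _ => (hN' i k).mul (h k j)
    have hEv : (fun t => ∑ k, (M t)⁻¹ i k * M t k j) =ᶠ[nhds x]
        (fun _ => (1 : Matrix (Fin n) (Fin n) ℝ) i j) := by
      filter_upwards [hU] with t ht
      have h1 : (M t)⁻¹ * M t = 1 := Matrix.nonsing_inv_mul _ (isUnit_iff_ne_zero.mpr ht)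
      calc ∑ k, (M t)⁻¹ i k * M t k j = ((M t)⁻¹ * M t) i j := (Matrix.mul_apply ..).symm
        _ = (1 : Matrix (Fin n) (Fin n) ℝ) i j := by rw [h1]
    have hL' : HasDerivAt (fun _ : ℝ => (1 : Matrix (Fin n) (Fin n) ℝ) i j)
        (∑ k, (N' i k * M x k j + (M x)⁻¹ i k * M' k j)) x :=
      (hL.congr_of_eventuallyEq hEv.symm)
    have h0 : (∑ k, (N' i k * M x k j + (M x)⁻¹ i k * M' k j)) = 0 :=
      hL'.unique (hasDerivAt_const x _)
    calc (N' * M x + (M x)⁻¹ * M') i j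
        = ∑ k, (N' i k * M x k j + (M x)⁻¹ i k * M' k j) := by
          simp [Matrix.add_apply, Matrix.mul_apply, Finset.sum_add_distrib]
      _ = 0 := h0
  have hMinv : M x * (M x)⁻¹ = 1 := Matrix.mul_nonsing_inv _ (isUnit_iff_ne_zero.mpr hdet)
  have hNM : N' * M x = -((M x)⁻¹ * M') := by
    have := key
    rw [add_eq_zero_iff_eq_neg] at this
    exact this
  have hfinal : N' = -((M x)⁻¹ * M' * (M x)⁻¹) := by
    calc N' = N' * 1 := (mul_one _).symm
      _ = N' * (M x * (M x)⁻¹) := by rw [hMinv]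
      _ = (N' * M x) * (M x)⁻¹ := by rw [mul_assoc]
      _ = -((M x)⁻¹ * M') * (M x)⁻¹ := by rw [hNM]
      _ = -((M x)⁻¹ * M' * (M x)⁻¹) := by rw [neg_mul]
  intro i j
  have := hN' i j
  rwa [hfinal] at this

theorem hasDerivAt_trace_inv_mul' (M : ℝ → Matrix (Fin n) (Fin n) ℝ)
    (M' K : Matrix (Fin n) (Fin n) ℝ) (x : ℝ)
    (hinv : ∀ i j, HasDerivAt (fun t => (M t)⁻¹ i j) ((-((M x)⁻¹ * M' * (M x)⁻¹)) i j) x) :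
    HasDerivAt (fun t => Matrix.trace ((M t)⁻¹ * K))
      (Matrix.trace (-((M x)⁻¹ * M' * (M x)⁻¹) * K)) x := by
  have hfun : ∀ t, Matrix.trace ((M t)⁻¹ * K) = ∑ i, ∑ k, (M t)⁻¹ i k * K k i := by
    intro t; simp [Matrix.trace, Matrix.diag, Matrix.mul_apply]
  have hval : Matrix.trace (-((M x)⁻¹ * M' * (M x)⁻¹) * K)
      = ∑ i, ∑ k, (-((M x)⁻¹ * M' * (M x)⁻¹)) i k * K k i := by
    simp [Matrix.trace, Matrix.diag, Matrix.mul_apply]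
  simp only [hfun, hval]
  exact HasDerivAt.fun_sum fun i _ => HasDerivAt.fun_sum fun k _ => (hinv i k).mul_const _

theorem posDef_add {A B : Matrix (Fin n) (Fin n) ℝ} (hA : A.PosDef) (hB : B.PosDef) :
    (A + B).PosDef := by
  exact hA.add hB

theorem coef1_hasDerivAt {w : ℝ} (hw : w ≠ 0) :
    HasDerivAt (fun u : ℝ => -(1 / u ^ 2)) (2 / w ^ 3) w := by
  have h := ((hasDerivAt_pow 2 w).inv (pow_ne_zero 2 hw)).neg
  have hf : (fun u : ℝ => -(1 / u ^ 2)) = fun u : ℝ => -((u ^ 2)⁻¹) := by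
    funext u; rw [one_div]
  rw [hf]
  refine h.congr_deriv ?_
  field_simp; ring

theorem coef2_hasDerivAt {w : ℝ} (hw : (1 : ℝ) - w ≠ 0) :
    HasDerivAt (fun u : ℝ => 1 / (1 - u) ^ 2) (2 / (1 - w) ^ 3) w := by
  have hin : HasDerivAt (fun u : ℝ => 1 - u) (-1) w := by
    simpa using (hasDerivAt_id w).const_sub 1
  have h := (((hasDerivAt_pow 2 (1 - w)).inv (pow_ne_zero 2 hw)).comp w hin)
  simp only [Function.comp_def] at h
  have hf : (fun u : ℝ => 1 / (1 - u) ^ 2) = fun u : ℝ => (((1 : ℝ) - u) ^ 2)⁻¹ := by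
    funext u; rw [one_div]
  rw [hf]
  refine h.congr_deriv ?_
  field_simp; ring

theorem inv_one_sub_hasDerivAt {w : ℝ} (hw : (1 : ℝ) - w ≠ 0) :
    HasDerivAt (fun u : ℝ => 1 / (1 - u)) (1 / (1 - w) ^ 2) w := by
  have hin : HasDerivAt (fun u : ℝ => 1 - u) (-1) w := by
    simpa using (hasDerivAt_id w).const_sub 1
  have h := (hasDerivAt_inv hw).comp w hin
  simp only [Function.comp_def] at h
  have hf : (fun u : ℝ => 1 / (1 - u)) = fun u : ℝ => ((1 : ℝ) - u)⁻¹ := by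
    funext u; rw [one_div]
  rw [hf]
  refine h.congr_deriv ?_
  field_simp

theorem inv_hasDerivAt' {w : ℝ} (hw : w ≠ 0) :
    HasDerivAt (fun u : ℝ => 1 / u) (-(1 / w ^ 2)) w := by
  have h := hasDerivAt_inv hw
  have hf : (fun u : ℝ => 1 / u) = fun u : ℝ => u⁻¹ := by
    funext u; rw [one_div]
  rw [hf]
  refine h.congr_deriv ?_
  rw [one_div]
noncomputable def Gf (A B C : Matrix (Fin n) (Fin n) ℝ) : ℝ → Matrix (Fin n) (Fin n) ℝ :=
  fun t => (1 / t) • A + (1 / (1 - t)) • B + C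



theorem fam_entries (A B C : Matrix (Fin n) (Fin n) ℝ) {x : ℝ} (hx0 : x ≠ 0)
    (hx1 : (1 : ℝ) - x ≠ 0) : ∀ i j, HasDerivAt (fun t => Gf A B C t i j)
      (((-(1 / x ^ 2)) • A + (1 / (1 - x) ^ 2) • B) i j) x := by
  intro i j
  have h := (((inv_hasDerivAt' hx0).mul_const (A i j)).add
    ((inv_one_sub_hasDerivAt hx1).mul_const (B i j))).add_const (C i j)
  have hf : (fun t => Gf A B C t i j)
      = fun t => 1 / t * A i j + 1 / (1 - t) * B i j + C i j := by
    funext t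
    simp [Gf, Matrix.add_apply, Matrix.smul_apply, smul_eq_mul]
  rw [hf]
  refine h.congr_deriv ?_
  rfl

theorem fam_det_ne (A B C : Matrix (Fin n) (Fin n) ℝ)
    (hpos : ∀ t ∈ Ioo (0 : ℝ) 1, (Gf A B C t).PosDef) {x : ℝ} (hx : x ∈ Ioo (0 : ℝ) 1) :
    (Gf A B C x).det ≠ 0 := (hpos x hx).det_pos.ne'

theorem fam_hU (A B C : Matrix (Fin n) (Fin n) ℝ)
    (hpos : ∀ t ∈ Ioo (0 : ℝ) 1, (Gf A B C t).PosDef) {x : ℝ} (hx : x ∈ Ioo (0 : ℝ) 1) :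
    ∀ᶠ t in nhds x, (Gf A B C t).det ≠ 0 := by
  filter_upwards [Ioo_mem_nhds hx.1 hx.2] with t ht
  exact fam_det_ne A B C hpos ht

theorem fam_logderiv (A B C : Matrix (Fin n) (Fin n) ℝ)
    (hpos : ∀ t ∈ Ioo (0 : ℝ) 1, (Gf A B C t).PosDef) {x : ℝ} (hx : x ∈ Ioo (0 : ℝ) 1) :
    HasDerivAt (fun t => Real.log (Gf A B C t).det)
      (-(1 / x ^ 2) * Matrix.trace ((Gf A B C x)⁻¹ * A)
        + 1 / (1 - x) ^ 2 * Matrix.trace ((Gf A B C x)⁻¹ * B)) x := by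
  have hx0 : x ≠ 0 := ne_of_gt hx.1
  have hx1 : (1 : ℝ) - x ≠ 0 := by have := hx.2; linarith
  have h := hasDerivAt_log_det (Gf A B C) ((-(1 / x ^ 2)) • A + (1 / (1 - x) ^ 2) • B) x
    (fam_entries A B C hx0 hx1) (fam_det_ne A B C hpos hx)
  have hv : Matrix.trace ((Gf A B C x)⁻¹ * ((-(1 / x ^ 2)) • A + (1 / (1 - x) ^ 2) • B))
      = -(1 / x ^ 2) * Matrix.trace ((Gf A B C x)⁻¹ * A)
        + 1 / (1 - x) ^ 2 * Matrix.trace ((Gf A B C x)⁻¹ * B) := by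
    rw [Matrix.mul_add, Matrix.mul_smul, Matrix.mul_smul, Matrix.trace_add, Matrix.trace_smul,
      Matrix.trace_smul, smul_eq_mul, smul_eq_mul]
  exact hv ▸ h

theorem fam_second (A B C : Matrix (Fin n) (Fin n) ℝ)
    (hpos : ∀ t ∈ Ioo (0 : ℝ) 1, (Gf A B C t).PosDef) {w : ℝ} (hw : w ∈ Ioo (0 : ℝ) 1) :
    HasDerivAt (fun u => -(1 / u ^ 2) * Matrix.trace ((Gf A B C u)⁻¹ * A)
        + 1 / (1 - u) ^ 2 * Matrix.trace ((Gf A B C u)⁻¹ * B))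
      (2 / w ^ 3 * Matrix.trace ((Gf A B C w)⁻¹ * A)
          - 1 / w ^ 4 * Matrix.trace ((Gf A B C w)⁻¹ * A * (Gf A B C w)⁻¹ * A)
          + 1 / (w ^ 2 * (1 - w) ^ 2) * Matrix.trace ((Gf A B C w)⁻¹ * B * (Gf A B C w)⁻¹ * A)
          + 2 / (1 - w) ^ 3 * Matrix.trace ((Gf A B C w)⁻¹ * B)
          + 1 / (w ^ 2 * (1 - w) ^ 2) * Matrix.trace ((Gf A B C w)⁻¹ * A * (Gf A B C w)⁻¹ * B)
          - 1 / (1 - w) ^ 4 * Matrix.trace ((Gf A B C w)⁻¹ * B * (Gf A B C w)⁻¹ * B)) w := by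
  have hw0 : w ≠ 0 := ne_of_gt hw.1
  have hw1 : (1 : ℝ) - w ≠ 0 := by have := hw.2; linarith
  set N := (Gf A B C w)⁻¹ with hN
  set G' : Matrix (Fin n) (Fin n) ℝ := (-(1 / w ^ 2)) • A + (1 / (1 - w) ^ 2) • B with hG'
  have hinv := hasDerivAt_inv_entries (Gf A B C) G' w
    (fam_entries A B C hw0 hw1) (fam_hU A B C hpos hw)
  have hτA := hasDerivAt_trace_inv_mul' (Gf A B C) G' A w hinv
  have hτB := hasDerivAt_trace_inv_mul' (Gf A B C) G' B w hinv
  have helper : ∀ K : Matrix (Fin n) (Fin n) ℝ,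
      Matrix.trace (-(N * G' * N) * K)
        = 1 / w ^ 2 * Matrix.trace (N * A * N * K)
          - 1 / (1 - w) ^ 2 * Matrix.trace (N * B * N * K) := by
    intro K
    rw [hG']
    simp only [Matrix.mul_add, Matrix.add_mul, Matrix.mul_smul, Matrix.smul_mul,
      Matrix.neg_mul, Matrix.trace_neg, Matrix.trace_add, Matrix.trace_smul, smul_eq_mul]
    ring
  have h := ((coef1_hasDerivAt hw0).mul hτA).add ((coef2_hasDerivAt hw1).mul hτB)
  have hv : 2 / w ^ 3 * Matrix.trace (N * A)
        + -(1 / w ^ 2) * Matrix.trace (-(N * G' * N) * A)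
        + (2 / (1 - w) ^ 3 * Matrix.trace (N * B)
          + 1 / (1 - w) ^ 2 * Matrix.trace (-(N * G' * N) * B))
      = 2 / w ^ 3 * Matrix.trace (N * A)
          - 1 / w ^ 4 * Matrix.trace (N * A * N * A)
          + 1 / (w ^ 2 * (1 - w) ^ 2) * Matrix.trace (N * B * N * A)
          + 2 / (1 - w) ^ 3 * Matrix.trace (N * B)
          + 1 / (w ^ 2 * (1 - w) ^ 2) * Matrix.trace (N * A * N * B)
          - 1 / (1 - w) ^ 4 * Matrix.trace (N * B * N * B) := by
    rw [helper A, helper B]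
    field_simp
    ring
  exact hv ▸ h

end Machinery

/-- For the split CIF, at a fixed `w ∈ (0,1)`, the second derivative of
`x ↦ log det P₁(x) + log det P₂(x) − log det (P₁(x) + P₂(x))` equals
`T₁/w² + T₂/(1−w)² − 2 T₃/(w(1−w))` with `T₁`, `T₂`, `T₃` the indicated traces. -/
theorem split_cif_second_deriv_decomposition (n : ℕ) (hn : 0 < n)
    (P1d P1i P2d P2i : Matrix (Fin n) (Fin n) ℝ)
    (hP1d : P1d.PosSemidef) (hP1i : P1i.PosSemidef)
    (hP2d : P2d.PosSemidef) (hP2i : P2i.PosSemidef)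
    (hpos : ∀ w ∈ Set.Ioo (0 : ℝ) 1,
      ((1 / w) • P1d + P1i).PosDef ∧ ((1 / (1 - w)) • P2d + P2i).PosDef)
    (w : ℝ) (hw : w ∈ Set.Ioo (0 : ℝ) 1)
    (P₁ P₂ P₃ D₁ D₂ : Matrix (Fin n) (Fin n) ℝ)
    (hP₁ : P₁ = (1 / w) • P1d + P1i) (hP₂ : P₂ = (1 / (1 - w)) • P2d + P2i)
    (hP₃ : P₃ = P₁ + P₂)
    (hD₁ : D₁ = (1 / w) • P1d) (hD₂ : D₂ = (1 / (1 - w)) • P2d)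
    (T₁ T₂ T₃ : ℝ)
    (hT₁ : T₁ = Matrix.trace ((2 : ℝ) • (P₁⁻¹ * D₁) - (2 : ℝ) • (P₃⁻¹ * D₁)
      - P₁⁻¹ * D₁ * P₁⁻¹ * D₁ + P₃⁻¹ * D₁ * P₃⁻¹ * D₁))
    (hT₂ : T₂ = Matrix.trace ((2 : ℝ) • (P₂⁻¹ * D₂) - (2 : ℝ) • (P₃⁻¹ * D₂)
      - P₂⁻¹ * D₂ * P₂⁻¹ * D₂ + P₃⁻¹ * D₂ * P₃⁻¹ * D₂))
    (hT₃ : T₃ = Matrix.trace (P₃⁻¹ * D₁ * P₃⁻¹ * D₂)) :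
    deriv (deriv (fun x =>
        Real.log ((1 / x) • P1d + P1i).det + Real.log ((1 / (1 - x)) • P2d + P2i).det
          - Real.log (((1 / x) • P1d + P1i) + ((1 / (1 - x)) • P2d + P2i)).det)) w =
      T₁ / w ^ 2 + T₂ / (1 - w) ^ 2 - 2 * T₃ / (w * (1 - w)) := by
  have hw0 : w ≠ 0 := ne_of_gt hw.1
  have hw1 : (1 : ℝ) - w ≠ 0 := by have := hw.2; linarith
  -- positivity of the three families
  have hG1pos : ∀ t ∈ Ioo (0 : ℝ) 1, (Gf P1d 0 P1i t).PosDef := by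
    intro t ht
    have heq : Gf P1d 0 P1i t = (1 / t) • P1d + P1i := by simp [Gf]
    rw [heq]; exact (hpos t ht).1
  have hG2pos : ∀ t ∈ Ioo (0 : ℝ) 1, (Gf 0 P2d P2i t).PosDef := by
    intro t ht
    have heq : Gf 0 P2d P2i t = (1 / (1 - t)) • P2d + P2i := by simp [Gf]
    rw [heq]; exact (hpos t ht).2
  have hG3pos : ∀ t ∈ Ioo (0 : ℝ) 1, (Gf P1d P2d (P1i + P2i) t).PosDef := by
    intro t ht
    have heq : Gf P1d P2d (P1i + P2i) t
        = ((1 / t) • P1d + P1i) + ((1 / (1 - t)) • P2d + P2i) := by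
      simp only [Gf]; abel
    rw [heq]; exact posDef_add (hpos t ht).1 (hpos t ht).2
  -- rewrite the function in Gf form
  have hfun : (fun x =>
        Real.log ((1 / x) • P1d + P1i).det + Real.log ((1 / (1 - x)) • P2d + P2i).det
          - Real.log (((1 / x) • P1d + P1i) + ((1 / (1 - x)) • P2d + P2i)).det)
      = fun x => Real.log (Gf P1d 0 P1i x).det + Real.log (Gf 0 P2d P2i x).det
          - Real.log (Gf P1d P2d (P1i + P2i) x).det := by
    funext x
    have e1 : Gf P1d 0 P1i x = (1 / x) • P1d + P1i := by simp [Gf]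
    have e2 : Gf 0 P2d P2i x = (1 / (1 - x)) • P2d + P2i := by simp [Gf]
    have e3 : Gf P1d P2d (P1i + P2i) x
        = ((1 / x) • P1d + P1i) + ((1 / (1 - x)) • P2d + P2i) := by
      simp only [Gf]; abel
    rw [e1, e2, e3]
  rw [hfun]
  -- first derivative on Ioo
  have hf' : ∀ u ∈ Ioo (0 : ℝ) 1, HasDerivAt
      (fun x => Real.log (Gf P1d 0 P1i x).det + Real.log (Gf 0 P2d P2i x).det
          - Real.log (Gf P1d P2d (P1i + P2i) x).det)
      ((-(1 / u ^ 2) * Matrix.trace ((Gf P1d 0 P1i u)⁻¹ * P1d)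
          + 1 / (1 - u) ^ 2 * Matrix.trace ((Gf P1d 0 P1i u)⁻¹ * 0))
        + (-(1 / u ^ 2) * Matrix.trace ((Gf 0 P2d P2i u)⁻¹ * 0)
          + 1 / (1 - u) ^ 2 * Matrix.trace ((Gf 0 P2d P2i u)⁻¹ * P2d))
        - (-(1 / u ^ 2) * Matrix.trace ((Gf P1d P2d (P1i + P2i) u)⁻¹ * P1d)
          + 1 / (1 - u) ^ 2 * Matrix.trace ((Gf P1d P2d (P1i + P2i) u)⁻¹ * P2d))) u := by
    intro u hu
    exact ((fam_logderiv P1d 0 P1i hG1pos hu).add (fam_logderiv 0 P2d P2i hG2pos hu)).sub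
      (fam_logderiv P1d P2d (P1i + P2i) hG3pos hu)
  have hEv : deriv (fun x => Real.log (Gf P1d 0 P1i x).det + Real.log (Gf 0 P2d P2i x).det
          - Real.log (Gf P1d P2d (P1i + P2i) x).det)
      =ᶠ[nhds w] (fun u =>
        (-(1 / u ^ 2) * Matrix.trace ((Gf P1d 0 P1i u)⁻¹ * P1d)
          + 1 / (1 - u) ^ 2 * Matrix.trace ((Gf P1d 0 P1i u)⁻¹ * 0))
        + (-(1 / u ^ 2) * Matrix.trace ((Gf 0 P2d P2i u)⁻¹ * 0)
          + 1 / (1 - u) ^ 2 * Matrix.trace ((Gf 0 P2d P2i u)⁻¹ * P2d))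
        - (-(1 / u ^ 2) * Matrix.trace ((Gf P1d P2d (P1i + P2i) u)⁻¹ * P1d)
          + 1 / (1 - u) ^ 2 * Matrix.trace ((Gf P1d P2d (P1i + P2i) u)⁻¹ * P2d))) := by
    filter_upwards [Ioo_mem_nhds hw.1 hw.2] with u hu
    exact (hf' u hu).deriv
  rw [hEv.deriv_eq]
  -- second derivative value
  have hφ := ((fam_second P1d 0 P1i hG1pos hw).add (fam_second 0 P2d P2i hG2pos hw)).sub
    (fam_second P1d P2d (P1i + P2i) hG3pos hw)
  simp only [Pi.add_def, Pi.sub_def] at hφ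
  rw [hφ.deriv]
  -- identify the base points
  have e1w : Gf P1d 0 P1i w = P₁ := by rw [hP₁]; simp [Gf]
  have e2w : Gf 0 P2d P2i w = P₂ := by rw [hP₂]; simp [Gf]
  have e3w : Gf P1d P2d (P1i + P2i) w = P₃ := by
    rw [hP₃, hP₁, hP₂]; simp only [Gf]; abel
  rw [e1w, e2w, e3w, hT₁, hT₂, hT₃, hD₁, hD₂]
  have hcomm : Matrix.trace (P₃⁻¹ * P2d * P₃⁻¹ * P1d)
      = Matrix.trace (P₃⁻¹ * P1d * P₃⁻¹ * P2d) := by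
    rw [mul_assoc, Matrix.trace_mul_comm, ← mul_assoc]
  simp only [Matrix.mul_zero, Matrix.zero_mul, Matrix.trace_zero, mul_zero, add_zero, zero_add,
    Matrix.mul_smul, Matrix.smul_mul, Matrix.trace_smul, Matrix.trace_add, Matrix.trace_sub,
    smul_eq_mul, smul_smul, hcomm]
  field_simp
  ring
end

section
/- Let n be a positive integer and let P1d, P1i, P2d, P2i be n×n real symmetric positive semidefinite matrices. For w ∈ (0,1) define P₁(w) = (1/w)·P1d + P1i and P₂(w) = (1/(1−w))·P2d + P2i, and assume P₁(w) and P₂(w) are positive definite for every w ∈ (0,1). Fix w ∈ (0,1) and set D₁ = P1d/w, D₂ = P2d/(1−w), P₃ = P₁(w)+P₂(w). Then the matrix inequalities 0 ≤ D₁ ≤ P₁(w) < P₃ and 0 ≤ D₂ ≤ P₂(w) < P₃ hold; consequently, by the key trace inequality, T₁ ≥ tr((P₁(w)⁻¹ − P₃⁻¹)·D₁·(P₁(w)⁻¹ − P₃⁻¹)·D₁) and T₂ ≥ tr((P₂(w)⁻¹ − P₃⁻¹)·D₂·(P₂(w)⁻¹ − P₃⁻¹)·D₂), where T₁ = tr(2P₁⁻¹D₁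 − 2P₃⁻¹D₁ − P₁⁻¹D₁P₁⁻¹D₁ + P₃⁻¹D₁P₃⁻¹D₁) and T₂ = tr(2P₂⁻¹D₂ − 2P₃⁻¹D₂ − P₂⁻¹D₂P₂⁻¹D₂ + P₃⁻¹D₂P₃⁻¹D₂) (with P₁ = P₁(w), P₂ = P₂(w)). -/
open Matrix

private lemma transp_eq' {n : ℕ} {M : Matrix (Fin n) (Fin n) ℝ} (hM : M.IsHermitian) : Mᵀ = M := by
  have := hM.eq
  simpa [Matrix.conjTranspose_eq_transpose_of_trivial] using this

private lemma sym_dot' {n : ℕ} {M : Matrix (Fin n) (Fin n) ℝ} (hM : M.IsHermitian)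
    (x y : Fin n → ℝ) : y ⬝ᵥ M *ᵥ x = x ⬝ᵥ M *ᵥ y := by
  rw [Matrix.dotProduct_mulVec, ← Matrix.mulVec_transpose, transp_eq' hM,
    dotProduct_comm]

private lemma quad_bound' {n : ℕ} {M : Matrix (Fin n) (Fin n) ℝ} (hM : M.PosSemidef)
    (x y : Fin n → ℝ) : 2 * (x ⬝ᵥ M *ᵥ y) - y ⬝ᵥ M *ᵥ y ≤ x ⬝ᵥ M *ᵥ x := by
  have h := hM.dotProduct_mulVec_nonneg (x - y)
  have hsym := sym_dot' hM.isHermitian x y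
  simp only [star_trivial, sub_dotProduct, dotProduct_sub,
    Matrix.mulVec_sub] at h
  linarith

private lemma psd_smul' {n : ℕ} {M : Matrix (Fin n) (Fin n) ℝ} {c : ℝ} (hc : 0 ≤ c)
    (hM : M.PosSemidef) : (c • M).PosSemidef := by
  refine Matrix.PosSemidef.of_dotProduct_mulVec_nonneg ?_ (fun x => ?_)
  · show (c • M)ᴴ = c • M
    rw [Matrix.conjTranspose_smul, hM.1.eq, star_trivial]
  · simp only [star_trivial, Matrix.smul_mulVec, dotProduct_smul, smul_eq_mul]
    exact mul_nonneg hc (by simpa using hM.dotProduct_mulVec_nonneg x)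

private lemma inv_sub_inv_psd' {n : ℕ} {P Q : Matrix (Fin n) (Fin n) ℝ}
    (hP : P.PosDef) (hQ : Q.PosDef) (hQP : (Q - P).PosSemidef) :
    (P⁻¹ - Q⁻¹).PosSemidef := by
  refine Matrix.PosSemidef.of_dotProduct_mulVec_nonneg ((hP.posSemidef.inv.1).sub (hQ.posSemidef.inv.1)) (fun x => ?_)
  simp only [star_trivial, Matrix.sub_mulVec, dotProduct_sub]
  set v := P⁻¹ *ᵥ x with hv
  set y := Q⁻¹ *ᵥ x with hy
  have hPv : P *ᵥ v = x := by
    rw [hv, Matrix.mulVec_mulVec, Matrix.mul_nonsing_inv _ hP.det_pos.ne'.isUnit,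
      Matrix.one_mulVec]
  have hQy : Q *ᵥ y = x := by
    rw [hy, Matrix.mulVec_mulVec, Matrix.mul_nonsing_inv _ hQ.det_pos.ne'.isUnit,
      Matrix.one_mulVec]
  have h1 := quad_bound' hP.posSemidef v y
  have h2 : v ⬝ᵥ P *ᵥ v = x ⬝ᵥ v := by rw [hPv, dotProduct_comm]
  have h3 : v ⬝ᵥ P *ᵥ y = x ⬝ᵥ y := by
    rw [sym_dot' hP.isHermitian, hPv, dotProduct_comm]
  have h4 : 0 ≤ y ⬝ᵥ (Q - P) *ᵥ y := by simpa using hQP.dotProduct_mulVec_nonneg y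
  have h5 : y ⬝ᵥ Q *ᵥ y = x ⬝ᵥ y := by rw [hQy, dotProduct_comm]
  simp only [Matrix.sub_mulVec, dotProduct_sub] at h4
  linarith

private lemma sub_conj_psd' {n : ℕ} {P D : Matrix (Fin n) (Fin n) ℝ}
    (hP : P.PosDef) (hD : D.PosSemidef) (hPD : (P - D).PosSemidef) :
    (D - D * P⁻¹ * D).PosSemidef := by
  have hh : (D * P⁻¹ * D).IsHermitian := by
    show (D * P⁻¹ * D)ᴴ = D * P⁻¹ * D
    rw [Matrix.conjTranspose_mul, Matrix.conjTranspose_mul, hD.1.eq, hP.posSemidef.inv.1.eq,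
      Matrix.mul_assoc]
  refine Matrix.PosSemidef.of_dotProduct_mulVec_nonneg (hD.1.sub hh) (fun x => ?_)
  have hPw : P *ᵥ (P⁻¹ *ᵥ (D *ᵥ x)) = D *ᵥ x := by
    rw [Matrix.mulVec_mulVec, Matrix.mul_nonsing_inv _ hP.det_pos.ne'.isUnit,
      Matrix.one_mulVec]
  set w := P⁻¹ *ᵥ (D *ᵥ x) with hw
  have e1 : x ⬝ᵥ (D * P⁻¹ * D) *ᵥ x = x ⬝ᵥ D *ᵥ w := by
    rw [show (D * P⁻¹ * D) *ᵥ x = D *ᵥ (P⁻¹ *ᵥ (D *ᵥ x)) by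
      simp [Matrix.mulVec_mulVec, Matrix.mul_assoc]]
  have e2 : x ⬝ᵥ D *ᵥ w = w ⬝ᵥ P *ᵥ w := by
    rw [sym_dot' hD.1 w x, ← hPw]
  have h1 := quad_bound' hD x w
  have h2 : 0 ≤ w ⬝ᵥ (P - D) *ᵥ w := by simpa using hPD.dotProduct_mulVec_nonneg w
  simp only [Matrix.sub_mulVec, dotProduct_sub] at h2 ⊢
  simp only [star_trivial]
  linarith [e1, e2]

private lemma trace_nonneg' {n : ℕ} {M : Matrix (Fin n) (Fin n) ℝ} (h : M.PosSemidef) :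
    0 ≤ M.trace := by
  rw [Matrix.trace]
  apply Finset.sum_nonneg
  intro i _
  have := h.dotProduct_mulVec_nonneg (Pi.single i 1)
  simpa [dotProduct, Matrix.mulVec, Pi.single_apply] using this

open scoped MatrixOrder in
private lemma trace_mul_nonneg' {n : ℕ} {A B : Matrix (Fin n) (Fin n) ℝ}
    (hA : A.PosSemidef) (hB : B.PosSemidef) : 0 ≤ (A * B).trace := by
  have hSh : (CFC.sqrt A)ᴴ = CFC.sqrt A := (CFC.sqrt_nonneg A).posSemidef.1.eq
  have hconj : (CFC.sqrt A * B * CFC.sqrt A).PosSemidef := by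
    have := hB.mul_mul_conjTranspose_same (CFC.sqrt A)
    rwa [hSh] at this
  have heq : (A * B).trace = (CFC.sqrt A * B * CFC.sqrt A).trace := by
    conv_lhs => rw [← CFC.sqrt_mul_sqrt_self A hA.nonneg]
    rw [Matrix.mul_assoc, Matrix.trace_mul_comm]
  rw [heq]
  exact trace_nonneg' hconj

private lemma key_trace_ineq' {n : ℕ} {P Q D : Matrix (Fin n) (Fin n) ℝ}
    (hP : P.PosDef) (hQ : Q.PosDef) (hD : D.PosSemidef)
    (hPD : (P - D).PosSemidef) (hQP : (Q - P).PosSemidef) :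
    Matrix.trace ((P⁻¹ - Q⁻¹) * D * (P⁻¹ - Q⁻¹) * D) ≤
      Matrix.trace ((2 : ℝ) • (P⁻¹ * D) - (2 : ℝ) • (Q⁻¹ * D)
        - P⁻¹ * D * P⁻¹ * D + Q⁻¹ * D * Q⁻¹ * D) := by
  set a := P⁻¹ with ha
  set b := Q⁻¹ with hb
  have hApsd : (a - b).PosSemidef := inv_sub_inv_psd' hP hQ hQP
  have hBpsd : (D - D * a * D).PosSemidef := sub_conj_psd' hP hD hPD
  have h0 : 0 ≤ Matrix.trace ((a - b) * (D - D * a * D)) := trace_mul_nonneg' hApsd hBpsd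
  have e0 : (a - b) * (D - D * a * D) =
      a * D - a * D * a * D - (b * D - b * D * a * D) := by noncomm_ring
  have e1 : (a - b) * D * (a - b) * D =
      a * D * a * D - a * D * b * D - (b * D * a * D - b * D * b * D) := by noncomm_ring
  have hcyc : Matrix.trace (b * D * a * D) = Matrix.trace (a * D * b * D) := by
    rw [Matrix.mul_assoc (b * D) a D, Matrix.mul_assoc (a * D) b D]
    exact Matrix.trace_mul_comm _ _
  rw [e0] at h0
  simp only [Matrix.trace_sub, Matrix.trace_add] at h0
  rw [e1]
  simp only [Matrix.trace_sub, Matrix.trace_add, Matrix.trace_smul, smul_eq_mul]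
  linarith

/-- For the split CIF, at a fixed `w ∈ (0,1)`, the matrix inequalities
`0 ≤ D₁ ≤ P₁(w) < P₃` and `0 ≤ D₂ ≤ P₂(w) < P₃` hold, and consequently
`T₁ ≥ tr((P₁⁻¹ − P₃⁻¹) D₁ (P₁⁻¹ − P₃⁻¹) D₁)` and
`T₂ ≥ tr((P₂⁻¹ − P₃⁻¹) D₂ (P₂⁻¹ − P₃⁻¹) D₂)`. -/
theorem split_cif_T_lower_bounds (n : ℕ) (hn : 0 < n)
    (P1d P1i P2d P2i : Matrix (Fin n) (Fin n) ℝ)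
    (hP1d : P1d.PosSemidef) (hP1i : P1i.PosSemidef)
    (hP2d : P2d.PosSemidef) (hP2i : P2i.PosSemidef)
    (hpos : ∀ w ∈ Set.Ioo (0 : ℝ) 1,
      ((1 / w) • P1d + P1i).PosDef ∧ ((1 / (1 - w)) • P2d + P2i).PosDef)
    (w : ℝ) (hw : w ∈ Set.Ioo (0 : ℝ) 1)
    (P₁ P₂ P₃ D₁ D₂ : Matrix (Fin n) (Fin n) ℝ)
    (hP₁ : P₁ = (1 / w) • P1d + P1i) (hP₂ : P₂ = (1 / (1 - w)) • P2d + P2i)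
    (hP₃ : P₃ = P₁ + P₂)
    (hD₁ : D₁ = (1 / w) • P1d) (hD₂ : D₂ = (1 / (1 - w)) • P2d)
    (T₁ T₂ : ℝ)
    (hT₁ : T₁ = Matrix.trace ((2 : ℝ) • (P₁⁻¹ * D₁) - (2 : ℝ) • (P₃⁻¹ * D₁)
      - P₁⁻¹ * D₁ * P₁⁻¹ * D₁ + P₃⁻¹ * D₁ * P₃⁻¹ * D₁))
    (hT₂ : T₂ = Matrix.trace ((2 : ℝ) • (P₂⁻¹ * D₂) - (2 : ℝ) • (P₃⁻¹ * D₂)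
      - P₂⁻¹ * D₂ * P₂⁻¹ * D₂ + P₃⁻¹ * D₂ * P₃⁻¹ * D₂)) :
    D₁.PosSemidef ∧ (P₁ - D₁).PosSemidef ∧ (P₃ - P₁).PosDef ∧
    D₂.PosSemidef ∧ (P₂ - D₂).PosSemidef ∧ (P₃ - P₂).PosDef ∧
    Matrix.trace ((P₁⁻¹ - P₃⁻¹) * D₁ * (P₁⁻¹ - P₃⁻¹) * D₁) ≤ T₁ ∧
    Matrix.trace ((P₂⁻¹ - P₃⁻¹) * D₂ * (P₂⁻¹ - P₃⁻¹) * D₂) ≤ T₂ := by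
  obtain ⟨hw0, hw1⟩ := hw
  have hP₁pd : P₁.PosDef := hP₁ ▸ (hpos w ⟨hw0, hw1⟩).1
  have hP₂pd : P₂.PosDef := hP₂ ▸ (hpos w ⟨hw0, hw1⟩).2
  have hP₃pd : P₃.PosDef := hP₃ ▸ hP₁pd.add hP₂pd
  have hD₁psd : D₁.PosSemidef := hD₁ ▸ psd_smul' (div_nonneg zero_le_one hw0.le) hP1d
  have hD₂psd : D₂.PosSemidef := hD₂ ▸ psd_smul' (div_nonneg zero_le_one (by linarith)) hP2d
  have hP₁D₁ : P₁ - D₁ = P1i := by rw [hP₁, hD₁]; abel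
  have hP₂D₂ : P₂ - D₂ = P2i := by rw [hP₂, hD₂]; abel
  have hP₃P₁ : P₃ - P₁ = P₂ := by rw [hP₃]; abel
  have hP₃P₂ : P₃ - P₂ = P₁ := by rw [hP₃]; abel
  refine ⟨hD₁psd, hP₁D₁ ▸ hP1i, hP₃P₁ ▸ hP₂pd, hD₂psd, hP₂D₂ ▸ hP2i, hP₃P₂ ▸ hP₁pd, ?_, ?_⟩
  · rw [hT₁]
    exact key_trace_ineq' hP₁pd hP₃pd hD₁psd (hP₁D₁ ▸ hP1i) (hP₃P₁ ▸ hP₂pd.posSemidef)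
  · rw [hT₂]
    exact key_trace_ineq' hP₂pd hP₃pd hD₂psd (hP₂D₂ ▸ hP2i) (hP₃P₂ ▸ hP₁pd.posSemidef)
end
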